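/- arXiv:2511.12534 — 8 statements merged into one kernel-verified Lean document; each statement's English description precedes it below -/
import Mathlib

section
/- Under the elliptical potential setting, Σ_{m=1}^M n_m · c_mᵀ V_m⁻¹ c_m ≤ 2·d·log(1 + τ/(λ·d)). -/
open Matrix Finset

private lemma ep_aux_log (x : ℝ) (hx0 : 0 ≤ x) (hx1 : x ≤ 1) :
    x ≤ 2 * Real.log (1 + x) := by
  have hE : Real.exp (x / 2) ≤ 1 + x := by
    have h2 : (-(x / 2)) + 1 ≤ Real.exp (-(x / 2)) := Real.add_one_le_exp _
    have h4 : Real.exp (x / 2) * Real.exp (-(x / 2)) = 1 := by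
      rw [← Real.exp_add]; simp
    nlinarith [Real.exp_pos (x / 2), Real.exp_pos (-(x / 2))]
  have := Real.log_le_log (Real.exp_pos _) hE
  rw [Real.log_exp] at this
  linarith

private lemma ep_amgm (d : ℕ) (hd : 0 < d) (z : Fin d → ℝ) (hz : ∀ i, 0 ≤ z i) :
    ∏ i, z i ≤ ((∑ i, z i) / d) ^ d := by
  have hdR : (0 : ℝ) < d := by exact_mod_cast hd
  have key := Real.geom_mean_le_arith_mean_weighted Finset.univ (fun _ => (d : ℝ)⁻¹) z
      (fun _ _ => by positivity)
      (by simp [Finset.card_univ]; field_simp)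
      (fun i _ => hz i)
  have hprod : (∏ i, z i ^ ((d : ℝ)⁻¹)) ^ d = ∏ i, z i := by
    rw [← Finset.prod_pow]
    refine Finset.prod_congr rfl fun i _ => ?_
    rw [← Real.rpow_natCast (z i ^ ((d : ℝ)⁻¹)) d, ← Real.rpow_mul (hz i),
      inv_mul_cancel₀ hdR.ne', Real.rpow_one]
  calc ∏ i, z i = (∏ i, z i ^ ((d : ℝ)⁻¹)) ^ d := hprod.symm
    _ ≤ (∑ i, (d : ℝ)⁻¹ * z i) ^ d := by
        refine pow_le_pow_left₀ (Finset.prod_nonneg fun i _ => Real.rpow_nonneg (hz i) _) key d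
    _ = ((∑ i, z i) / d) ^ d := by rw [← Finset.mul_sum]; ring

private lemma ep_sum_Icc (M : ℕ) (g : ℕ → ℝ) :
    ∑ m ∈ Finset.Icc 1 M, g m = ∑ i ∈ Finset.range M, g (i + 1) := by
  induction M with
  | zero => simp
  | succ K ih => rw [Finset.sum_Icc_succ_top (by omega), Finset.sum_range_succ, ih]

/-- Elliptical potential lemma:
`∑_{m=1}^M n_m c_mᵀ V_m⁻¹ c_m ≤ 2 d log (1 + τ/(λ d))`. -/
theorem elliptical_potential_sum {d M : ℕ} (hd : 1 ≤ d) (lam : ℝ) (hlam : 1 ≤ lam)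
    (c : ℕ → Fin d → ℝ) (n : ℕ → ℕ)
    (V : ℕ → Matrix (Fin d) (Fin d) ℝ)
    (hc : ∀ m, 1 ≤ m → m ≤ M → Real.sqrt (∑ k, c m k ^ 2) ≤ 1)
    (hV1 : V 1 = lam • (1 : Matrix (Fin d) (Fin d) ℝ))
    (hVrec : ∀ m, 1 ≤ m → m ≤ M →
      V (m + 1) = V m + (n m : ℝ) • vecMulVec (c m) (c m))
    (hsmall : ∀ m, 1 ≤ m → m ≤ M →
      (n m : ℝ) * (c m ⬝ᵥ (V m)⁻¹.mulVec (c m)) ≤ 1) :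
    ∑ m ∈ Finset.Icc 1 M, (n m : ℝ) * (c m ⬝ᵥ (V m)⁻¹.mulVec (c m)) ≤
      2 * d * Real.log (1 + ((∑ m ∈ Finset.Icc 1 M, n m : ℕ) : ℝ) / (lam * d)) := by
  have hlam0 : (0 : ℝ) < lam := lt_of_lt_of_le one_pos hlam
  have hdR : (0 : ℝ) < d := by exact_mod_cast hd
  set x : ℕ → ℝ := fun m => (n m : ℝ) * (c m ⬝ᵥ (V m)⁻¹.mulVec (c m)) with hx
  -- positive semidefiniteness of the rank-one updates
  have hvmv : ∀ m : ℕ, ((n m : ℝ) • vecMulVec (c m) (c m)).PosSemidef := by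
    intro m
    have h1 : (vecMulVec (c m) (c m)).PosSemidef := by
      rw [vecMulVec_eq Unit]
      have : replicateRow Unit (c m) = (replicateCol Unit (c m))ᴴ := by ext i j; simp [replicateCol, replicateRow]
      rw [this]
      exact posSemidef_self_mul_conjTranspose _
    refine .of_dotProduct_mulVec_nonneg ?_ fun v => ?_
    · show _ᴴ = _
      ext i j
      simp [Matrix.conjTranspose_apply, Matrix.smul_apply, vecMulVec_apply]
      exact Or.inl (mul_comm _ _)
    · rw [smul_mulVec, dotProduct_smul]
      have := h1.dotProduct_mulVec_nonneg v
      simpa using mul_nonneg (by positivity : (0:ℝ) ≤ (n m : ℝ)) this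
  -- positive definiteness of all the V m
  have hV1pd : (V 1).PosDef := by
    rw [hV1]
    have : lam • (1 : Matrix (Fin d) (Fin d) ℝ) = Matrix.diagonal (fun _ => lam) := by
      ext i j
      by_cases h : i = j <;> simp [Matrix.one_apply, Matrix.diagonal, h]
    rw [this]
    exact Matrix.posDef_diagonal_iff.mpr fun _ => hlam0
  have hpos : ∀ m, 1 ≤ m → m ≤ M + 1 → (V m).PosDef := by
    intro m
    induction m with
    | zero => intro h; omega
    | succ k ih =>
      intro h1 h2
      rcases Nat.eq_zero_or_pos k with hk | hk
      · subst hk; exact hV1pd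
      · rw [hVrec k hk (by omega)]
        exact (ih hk (by omega)).add_posSemidef (hvmv k)
  -- nonnegativity of the terms
  have hx0 : ∀ m, 1 ≤ m → m ≤ M → 0 ≤ x m := by
    intro m h1 h2
    refine mul_nonneg (by positivity) ?_
    have := ((hpos m h1 (by omega)).inv).posSemidef.dotProduct_mulVec_nonneg (c m)
    simpa using this
  -- determinant recursion
  have hdetpos : ∀ m, 1 ≤ m → m ≤ M + 1 → 0 < (V m).det := fun m h1 h2 =>
    (hpos m h1 h2).det_pos
  have hdet : ∀ m, 1 ≤ m → m ≤ M → (V (m + 1)).det = (V m).det * (1 + x m) := by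
    intro m h1 h2
    have hU : IsUnit (V m).det := (hdetpos m h1 (by omega)).ne'.isUnit
    rw [hVrec m h1 h2]
    have hrw : (n m : ℝ) • vecMulVec (c m) (c m)
        = replicateCol Unit ((n m : ℝ) • c m) * replicateRow Unit (c m) := by
      ext i j
      simp [vecMulVec_apply, Matrix.mul_apply, Matrix.replicateCol, Matrix.replicateRow, Matrix.smul_apply]
      ring
    rw [hrw, det_add_replicateCol_mul_replicateRow hU]
    congr 1
    rw [det_unique]
    simp [Matrix.mul_apply, Matrix.replicateRow, Matrix.replicateCol, Matrix.one_apply, dotProduct,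
      Matrix.mulVec, Finset.mul_sum, Finset.sum_mul, hx]
    rw [Finset.sum_comm]
    refine Finset.sum_congr rfl fun i _ => Finset.sum_congr rfl fun j _ => by ring
  -- per-step log bound
  have hstep : ∀ m, 1 ≤ m → m ≤ M →
      x m ≤ 2 * (Real.log (V (m + 1)).det - Real.log (V m).det) := by
    intro m h1 h2
    have hxm1 : x m ≤ 1 := hsmall m h1 h2
    have := ep_aux_log (x m) (hx0 m h1 h2) hxm1
    have hlog : Real.log (V (m + 1)).det = Real.log (V m).det + Real.log (1 + x m) := by
      rw [hdet m h1 h2, Real.log_mul (hdetpos m h1 (by omega)).ne'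
        (by nlinarith [hx0 m h1 h2])]
    linarith
  -- telescoping
  have htele : ∑ m ∈ Finset.Icc 1 M, x m ≤
      2 * (Real.log (V (M + 1)).det - Real.log (V 1).det) := by
    have h1 : ∑ m ∈ Finset.Icc 1 M, x m ≤
        ∑ m ∈ Finset.Icc 1 M, 2 * (Real.log (V (m + 1)).det - Real.log (V m).det) := by
      refine Finset.sum_le_sum fun m hm => ?_
      rw [Finset.mem_Icc] at hm
      exact hstep m hm.1 hm.2
    have h2 : ∑ m ∈ Finset.Icc 1 M, (Real.log (V (m + 1)).det - Real.log (V m).det)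
        = Real.log (V (M + 1)).det - Real.log (V 1).det := by
      rw [ep_sum_Icc]
      exact Finset.sum_range_sub (fun i => Real.log (V (i + 1)).det) M
    rw [← Finset.mul_sum] at h1
    rw [h2] at h1
    exact h1
  -- trace computation
  set τ : ℝ := ((∑ m ∈ Finset.Icc 1 M, n m : ℕ) : ℝ) with hτ
  have hτ0 : 0 ≤ τ := by positivity
  have htrace : (V (M + 1)).trace ≤ lam * d + τ := by
    have htr1 : (V 1).trace = lam * d := by
      rw [hV1, trace_smul, trace_one]
      simp [smul_eq_mul, Finset.card_univ]
    have hstep' : ∀ m, 1 ≤ m → m ≤ M →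
        (V (m + 1)).trace ≤ (V m).trace + (n m : ℝ) := by
      intro m h1 h2
      rw [hVrec m h1 h2, trace_add, trace_smul]
      have hcle : (∑ k, c m k ^ 2) ≤ 1 := by
        have h := hc m h1 h2
        have hnn : (0:ℝ) ≤ ∑ k, c m k ^ 2 := by positivity
        nlinarith [Real.sq_sqrt hnn, Real.sqrt_nonneg (∑ k, c m k ^ 2)]
      have htvv : (vecMulVec (c m) (c m)).trace = ∑ k, c m k ^ 2 := by
        simp [Matrix.trace, Matrix.diag, vecMulVec_apply, pow_two]
      rw [htvv, smul_eq_mul]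
      have : (n m : ℝ) * (∑ k, c m k ^ 2) ≤ (n m : ℝ) * 1 :=
        mul_le_mul_of_nonneg_left hcle (by positivity)
      linarith
    have key : ∀ K, K ≤ M → (V (K + 1)).trace ≤ lam * d + ∑ m ∈ Finset.Icc 1 K, (n m : ℝ) := by
      intro K
      induction K with
      | zero => intro _; simp [htr1]
      | succ k ih =>
        intro hkM
        have h1 := hstep' (k + 1) (by omega) hkM
        have h2 := ih (by omega)
        rw [Finset.sum_Icc_succ_top (by omega : 1 ≤ k + 1)]
        linarith
    calc (V (M + 1)).trace ≤ lam * d + ∑ m ∈ Finset.Icc 1 M, (n m : ℝ) := key M le_rfl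
      _ = lam * d + τ := by rw [hτ]; push_cast; ring
  -- determinant bound via AM-GM on eigenvalues
  have hpdM : (V (M + 1)).PosDef := hpos (M + 1) (by omega) le_rfl
  have hH : (V (M + 1)).IsHermitian := hpdM.isHermitian
  have hdet_le : (V (M + 1)).det ≤ ((lam * d + τ) / d) ^ d := by
    have hdet_eq : (V (M + 1)).det = ∏ i, hH.eigenvalues i := by
      have := hH.det_eq_prod_eigenvalues
      simpa using this
    have htr_eq : (V (M + 1)).trace = ∑ i, hH.eigenvalues i := by
      simpa using hH.trace_eq_sum_eigenvalues
    have hev0 : ∀ i, 0 ≤ hH.eigenvalues i := fun i =>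
      hpdM.posSemidef.eigenvalues_nonneg i
    have h1 : (V (M + 1)).det ≤ ((V (M + 1)).trace / d) ^ d := by
      rw [hdet_eq, htr_eq]
      exact ep_amgm d hd hH.eigenvalues hev0
    refine le_trans h1 ?_
    refine pow_le_pow_left₀ ?_ ?_ d
    · rw [htr_eq]
      exact div_nonneg (Finset.sum_nonneg fun i _ => hev0 i) hdR.le
    · gcongr
  -- put everything together
  have hlog1 : Real.log (V 1).det = (d : ℝ) * Real.log lam := by
    rw [hV1, det_smul, det_one, mul_one]
    simp [Real.log_pow, Finset.card_univ]
  have harg : (0 : ℝ) < (lam * d + τ) / d := by positivity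
  have hlogM : Real.log (V (M + 1)).det ≤ (d : ℝ) * Real.log ((lam * d + τ) / d) := by
    calc Real.log (V (M + 1)).det ≤ Real.log (((lam * d + τ) / d) ^ d) :=
          Real.log_le_log (hdetpos (M + 1) (by omega) le_rfl) hdet_le
      _ = (d : ℝ) * Real.log ((lam * d + τ) / d) := by rw [Real.log_pow]
  have hfinal : Real.log ((lam * d + τ) / d) - Real.log lam
      = Real.log (1 + τ / (lam * d)) := by
    rw [← Real.log_div harg.ne' hlam0.ne']
    congr 1
    have hne : (d : ℝ) * lam ≠ 0 := by positivity
    rw [div_div, div_eq_iff hne]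
    field_simp
    try ring
    try tauto
  calc ∑ m ∈ Finset.Icc 1 M, x m
      ≤ 2 * (Real.log (V (M + 1)).det - Real.log (V 1).det) := htele
    _ ≤ 2 * ((d : ℝ) * Real.log ((lam * d + τ) / d) - (d : ℝ) * Real.log lam) := by
        rw [hlog1]; linarith
    _ = 2 * d * (Real.log ((lam * d + τ) / d) - Real.log lam) := by ring
    _ = 2 * d * Real.log (1 + τ / (lam * d)) := by rw [hfinal]
end

section
/- Let A be a d×d real symmetric positive definite matrix and Δ a d×d real symmetric positive semidefinite matrix with tr(A⁻¹Δ) ≤ 1. Then tr(A⁻¹Δ) ≤ 2·(log det(A + Δ) − log det A). -/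
open Matrix

open Finset in
lemma trace_eq_sum_eigs {d : ℕ} (S : Matrix (Fin d) (Fin d) ℝ) (hS : S.IsHermitian) :
    S.trace = ∑ i, hS.eigenvalues i := by
  have h1 := (Matrix.mem_unitaryGroup_iff').mp (hS.eigenvectorUnitary).2
  nth_rewrite 1 [hS.spectral_theorem]
  rw [Unitary.conjStarAlgAut_apply, Matrix.trace_mul_cycle, h1, one_mul]
  simp [Matrix.trace_diagonal]

lemma det_one_add_eq {d : ℕ} (S : Matrix (Fin d) (Fin d) ℝ) (hS : S.IsHermitian) :
    (1 + S).det = ∏ i, (1 + hS.eigenvalues i) := by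
  have h1 := (Matrix.mem_unitaryGroup_iff').mp (hS.eigenvectorUnitary).2
  have h2 := (Matrix.mem_unitaryGroup_iff).mp (hS.eigenvectorUnitary).2
  nth_rewrite 1 [hS.spectral_theorem]
  have : (1 : Matrix (Fin d) (Fin d) ℝ) + (hS.eigenvectorUnitary : Matrix (Fin d) (Fin d) ℝ) * diagonal (RCLike.ofReal ∘ hS.eigenvalues) * star (hS.eigenvectorUnitary : Matrix (Fin d) (Fin d) ℝ)
      = (hS.eigenvectorUnitary : Matrix (Fin d) (Fin d) ℝ) * (1 + diagonal (RCLike.ofReal ∘ hS.eigenvalues)) * star (hS.eigenvectorUnitary : Matrix (Fin d) (Fin d) ℝ) := by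
    rw [mul_add, add_mul, mul_one, h2]
  rw [Unitary.conjStarAlgAut_apply, this, det_mul, det_mul, mul_comm, ← mul_assoc, ← det_mul, h1, det_one, one_mul]
  rw [← diagonal_one, diagonal_add, det_diagonal]
  simp

lemma half_le_log_one_add {t : ℝ} (ht0 : 0 ≤ t) (ht1 : t ≤ 1) :
    t ≤ 2 * Real.log (1 + t) := by
  have hpos : (0:ℝ) < 1 + t := by linarith
  have hlog : Real.log ((1+t)⁻¹) ≤ (1+t)⁻¹ - 1 := Real.log_le_sub_one_of_pos (by positivity)
  rw [Real.log_inv] at hlog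
  have key : t / (1+t) ≤ Real.log (1+t) := by
    have : 1 - (1+t)⁻¹ = t / (1+t) := by field_simp; ring
    linarith [hlog, this.symm.le, this.le]
  have h2 : t / 2 ≤ t / (1+t) :=
    div_le_div_of_nonneg_left ht0 hpos (by linarith)
  linarith

/-- If `A` is symmetric positive definite, `Δ` is symmetric positive semidefinite, and
`tr(A⁻¹ Δ) ≤ 1`, then `tr(A⁻¹ Δ) ≤ 2 (log det (A + Δ) − log det A)`. -/
theorem trace_le_two_mul_logdet_diff {d : ℕ}
    (A Δ : Matrix (Fin d) (Fin d) ℝ)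
    (hA : A.PosDef) (hΔ : Δ.PosSemidef)
    (h : (A⁻¹ * Δ).trace ≤ 1) :
    (A⁻¹ * Δ).trace ≤ 2 * (Real.log (A + Δ).det - Real.log A.det) := by
  set B := (open scoped MatrixOrder in CFC.sqrt A) with hBdef
  have hB : B.PosSemidef := (open scoped MatrixOrder in (CFC.sqrt_nonneg A).posSemidef)
  have hBB : B * B = A := (open scoped MatrixOrder in CFC.sqrt_mul_sqrt_self A hA.posSemidef.nonneg)
  have hdetB : IsUnit B.det := by
    have : B.det * B.det = A.det := by rw [← det_mul, hBB]
    have hApos := hA.det_pos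
    rcases eq_or_ne B.det 0 with h0 | h0
    · rw [h0, mul_zero] at this; linarith
    · exact Ne.isUnit h0
  have hB1 : B * B⁻¹ = 1 := mul_nonsing_inv _ hdetB
  have hB2 : B⁻¹ * B = 1 := nonsing_inv_mul _ hdetB
  set S := B⁻¹ * Δ * B⁻¹ with hSdef
  have hBinvH : B⁻¹.IsHermitian := hB.1.inv
  have hS : S.PosSemidef := by
    have := hΔ.mul_mul_conjTranspose_same B⁻¹
    rwa [hBinvH.eq] at this
  -- trace equality
  have htr : (A⁻¹ * Δ).trace = S.trace := by
    rw [← hBB, Matrix.mul_inv_rev, hSdef, Matrix.trace_mul_cycle B⁻¹ Δ B⁻¹]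
  -- det equality
  have hBSB : B * S * B = Δ := by
    rw [hSdef, mul_assoc, mul_assoc, mul_assoc, hB2, mul_one, ← mul_assoc, hB1, one_mul]
  have hdet : (A + Δ).det = A.det * (1 + S).det := by
    have : A + Δ = B * (1 + S) * B := by
      rw [mul_add, add_mul, mul_one, hBB, hBSB]
    rw [this, det_mul, det_mul, ← hBB, det_mul]
    ring
  -- eigenvalues
  set μ := hS.1.eigenvalues with hμdef
  have hμ0 : ∀ i, 0 ≤ μ i := fun i => hS.eigenvalues_nonneg i
  have htrS : S.trace = ∑ i, μ i := trace_eq_sum_eigs S hS.1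
  have hsum1 : ∑ i, μ i ≤ 1 := by rw [htr, htrS] at h; exact h
  have hμ1 : ∀ i, μ i ≤ 1 := fun i =>
    le_trans (Finset.single_le_sum (fun j _ => hμ0 j) (Finset.mem_univ i)) hsum1
  have hdet1S : (1 + S).det = ∏ i, (1 + μ i) := det_one_add_eq S hS.1
  have hlogdet : Real.log (A + Δ).det - Real.log A.det = ∑ i, Real.log (1 + μ i) := by
    rw [hdet, Real.log_mul hA.det_pos.ne' (by
        rw [hdet1S]; exact (Finset.prod_pos (fun i _ => by linarith [hμ0 i])).ne'),
      hdet1S, Real.log_prod (fun i _ => by have := hμ0 i; intro hc; nlinarith)]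
    ring
  rw [htr, htrS, hlogdet, Finset.mul_sum]
  exact Finset.sum_le_sum fun i _ => half_le_log_one_add (hμ0 i) (hμ1 i)
end

section
/- Let λ > 0 and let c_1, …, c_τ ∈ ℝ^d with ‖c_t‖₂ ≤ 1 for all t. Define V = λ·I_d + Σ_{t=1}^τ c_t c_tᵀ. Then log det(λ⁻¹ V) ≤ d · log(1 + τ/(λ·d)). -/
open Matrix Finset

lemma posSemidef_vecMulVec_self {n : Type*} [Fintype n] (v : n → ℝ) :
    (vecMulVec v v).PosSemidef := by
  refine Matrix.posSemidef_iff_dotProduct_mulVec.mpr ⟨?_, fun x => ?_⟩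
  · ext i j
    simp [Matrix.conjTranspose_apply, vecMulVec_apply, mul_comm]
  · have h : star x ⬝ᵥ (vecMulVec v v *ᵥ x) = (v ⬝ᵥ x) ^ 2 := by
      simp only [dotProduct, mulVec, vecMulVec_apply, Pi.star_apply, star_trivial, sq,
        Finset.sum_mul, Finset.mul_sum]
      refine Finset.sum_congr rfl fun i _ => ?_
      refine Finset.sum_congr rfl fun j _ => ?_
      ring
    rw [h]
    positivity

lemma posSemidef_sum_vecMulVec {n : Type*} [Fintype n] {τ : ℕ} (c : Fin τ → n → ℝ) :
    (∑ t, vecMulVec (c t) (c t)).PosSemidef := by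
  classical
  induction (Finset.univ : Finset (Fin τ)) using Finset.induction_on with
  | empty => simpa using Matrix.PosSemidef.zero
  | insert _ _ h ih => rw [Finset.sum_insert h]; exact (posSemidef_vecMulVec_self _).add ih

lemma posSemidef_smul_real {n : Type*} [Fintype n] {A : Matrix n n ℝ} (hA : A.PosSemidef)
    {r : ℝ} (hr : 0 ≤ r) : (r • A).PosSemidef := by
  refine Matrix.posSemidef_iff_dotProduct_mulVec.mpr ⟨?_, fun x => ?_⟩
  · ext i j
    have := congrFun (congrFun hA.1 i) j
    simp only [Matrix.conjTranspose_apply, star_trivial, Matrix.smul_apply, smul_eq_mul] at *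
    rw [this]
  · rw [Matrix.smul_mulVec, dotProduct_smul, smul_eq_mul]
    exact mul_nonneg hr (hA.dotProduct_mulVec_nonneg x)

lemma trace_eq_sum_eigenvalues {n : Type*} [Fintype n] [DecidableEq n]
    {A : Matrix n n ℝ} (hA : A.IsHermitian) :
    A.trace = ∑ i, hA.eigenvalues i := by
  simpa using hA.trace_eq_sum_eigenvalues

/-- Log-determinant bound: if `‖c_t‖₂ ≤ 1` for all `t` and
`V = λ I + ∑_t c_t c_tᵀ`, then `log det (λ⁻¹ V) ≤ d log (1 + τ/(λ d))`. -/
theorem logdet_bound {d τ : ℕ} (lam : ℝ) (hlam : 0 < lam)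
    (c : Fin τ → Fin d → ℝ)
    (hc : ∀ t, Real.sqrt (∑ k, c t k ^ 2) ≤ 1) :
    Real.log ((lam⁻¹ • (lam • (1 : Matrix (Fin d) (Fin d) ℝ) +
        ∑ t, vecMulVec (c t) (c t))).det) ≤
      d * Real.log (1 + τ / (lam * d)) := by
  rcases Nat.eq_zero_or_pos d with hd | hd
  · subst hd
    simp [Matrix.det_isEmpty]
  have hd' : (0 : ℝ) < d := by exact_mod_cast hd
  set S : Matrix (Fin d) (Fin d) ℝ := ∑ t, vecMulVec (c t) (c t) with hSdef
  set M : Matrix (Fin d) (Fin d) ℝ := lam⁻¹ • (lam • 1 + S) with hMdef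
  have hMeq : M = 1 + lam⁻¹ • S := by
    rw [hMdef, smul_add, smul_smul, inv_mul_cancel₀ hlam.ne', one_smul]
  have hS : S.PosSemidef := posSemidef_sum_vecMulVec c
  have hMpd : M.PosDef := by
    rw [hMeq]
    exact Matrix.PosDef.one.add_posSemidef
      (posSemidef_smul_real hS (inv_nonneg.mpr hlam.le))
  have hH : M.IsHermitian := hMpd.isHermitian
  set μ : Fin d → ℝ := hH.eigenvalues with hμdef
  have hμpos : ∀ i, 0 < μ i := hMpd.eigenvalues_pos
  have hdet : M.det = ∏ i, μ i := by
    have := hH.det_eq_prod_eigenvalues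
    simpa using this
  have htr : M.trace = ∑ i, μ i := trace_eq_sum_eigenvalues hH
  -- trace bound
  have hnorm : ∀ t, ∑ k, c t k ^ 2 ≤ 1 := by
    intro t
    have h0 : (0 : ℝ) ≤ ∑ k, c t k ^ 2 := Finset.sum_nonneg fun k _ => sq_nonneg _
    calc ∑ k, c t k ^ 2 = Real.sqrt (∑ k, c t k ^ 2) ^ 2 := (Real.sq_sqrt h0).symm
      _ ≤ 1 ^ 2 := pow_le_pow_left₀ (Real.sqrt_nonneg _) (hc t) 2
      _ = 1 := one_pow 2
  have htrS : S.trace = ∑ t, ∑ k, c t k ^ 2 := by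
    rw [hSdef, Matrix.trace_sum]
    congr 1; ext t
    simp [Matrix.trace, Matrix.diag, vecMulVec_apply, sq]
  have htrace_le : M.trace ≤ d + τ / lam := by
    rw [hMdef, Matrix.trace_smul, Matrix.trace_add, Matrix.trace_smul, Matrix.trace_one, htrS]
    have h1 : ∑ t, ∑ k, c t k ^ 2 ≤ (τ : ℝ) := by
      calc ∑ t, ∑ k, c t k ^ 2 ≤ ∑ _t : Fin τ, (1 : ℝ) :=
            Finset.sum_le_sum fun t _ => hnorm t
        _ = τ := by simp
    have : lam⁻¹ • (lam • (Fintype.card (Fin d) : ℝ) + ∑ t, ∑ k, c t k ^ 2)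
        ≤ lam⁻¹ * (lam * d + τ) := by
      simp only [smul_eq_mul, Fintype.card_fin]
      apply mul_le_mul_of_nonneg_left _ (inv_nonneg.mpr hlam.le)
      linarith
    refine this.trans ?_
    rw [mul_add, ← mul_assoc, inv_mul_cancel₀ hlam.ne', one_mul, div_eq_inv_mul]
  set m : ℝ := (∑ i, μ i) / d with hmdef
  have hmpos : 0 < m := by
    apply div_pos _ hd'
    exact Finset.sum_pos (fun i _ => hμpos i) ⟨⟨0, hd⟩, Finset.mem_univ _⟩
  -- AM-GM
  have hamgm : ∏ i, μ i ≤ m ^ d := by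
    have hw : ∑ _i : Fin d, (d : ℝ)⁻¹ = 1 := by
      simp [Finset.sum_const]
      field_simp
    have key := Real.geom_mean_le_arith_mean_weighted Finset.univ (fun _ => (d : ℝ)⁻¹) μ
      (fun i _ => inv_nonneg.mpr hd'.le) hw (fun i _ => (hμpos i).le)
    have hsum : ∑ i, (d : ℝ)⁻¹ * μ i = m := by
      rw [hmdef, ← Finset.mul_sum, div_eq_inv_mul]
    rw [hsum] at key
    have hprod : (∏ i, μ i ^ ((d : ℝ)⁻¹)) ^ d = ∏ i, μ i := by
      rw [← Finset.prod_pow]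
      congr 1; ext i
      rw [← Real.rpow_natCast (μ i ^ ((d : ℝ)⁻¹)) d, ← Real.rpow_mul (hμpos i).le,
        inv_mul_cancel₀ hd'.ne', Real.rpow_one]
    calc ∏ i, μ i = (∏ i, μ i ^ ((d : ℝ)⁻¹)) ^ d := hprod.symm
      _ ≤ m ^ d := pow_le_pow_left₀ (Finset.prod_nonneg fun i _ =>
            Real.rpow_nonneg (hμpos i).le _) key d
  have hm_le : m ≤ 1 + τ / (lam * d) := by
    rw [hmdef, div_le_iff₀ hd', ← htr]
    calc M.trace ≤ d + τ / lam := htrace_le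
      _ = (1 + τ / (lam * d)) * d := by field_simp
  -- conclude
  have h1 : Real.log M.det ≤ Real.log (m ^ d) := by
    apply Real.log_le_log _ (hdet ▸ hamgm)
    rw [hdet]
    exact Finset.prod_pos fun i _ => hμpos i
  have h2 : Real.log (m ^ d) = d * Real.log m := by rw [Real.log_pow]
  have h3 : Real.log m ≤ Real.log (1 + τ / (lam * d)) := Real.log_le_log hmpos hm_le
  calc Real.log M.det ≤ d * Real.log m := by rw [← h2]; exact h1
    _ ≤ d * Real.log (1 + τ / (lam * d)) :=
        mul_le_mul_of_nonneg_left h3 (Nat.cast_nonneg d)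
end

section
/- Under the elliptical potential setting, for any a > 0, the number N of indices m with n_m ≥ 1 and ‖c_m‖_{V_m⁻¹} ≥ a satisfies N ≤ (2·d/a²)·log(1 + τ/(λ·d)). -/
open Matrix
open scoped Classical
open scoped Classical

lemma psd_smul_vecMulVec {d : ℕ} (r : ℝ) (hr : 0 ≤ r) (c : Fin d → ℝ) :
    ((r • vecMulVec c c : Matrix (Fin d) (Fin d) ℝ)).PosSemidef := by
  have hmv : ∀ x : Fin d → ℝ, (vecMulVec c c) *ᵥ x = (c ⬝ᵥ x) • c := by
    intro x; ext i
    simp [mulVec, vecMulVec_apply, dotProduct, Finset.mul_sum, Finset.sum_mul,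
      mul_comm, mul_assoc, mul_left_comm]
  refine posSemidef_iff_dotProduct_mulVec.mpr ⟨?_, ?_⟩
  · ext i j
    simp [vecMulVec_apply, mul_comm, conjTranspose_apply]
  · intro x
    have : (r • vecMulVec c c) *ᵥ x = r • ((c ⬝ᵥ x) • c) := by
      rw [smul_mulVec, hmv]
    rw [this]
    simp only [star_trivial, dotProduct_smul, smul_eq_mul]
    rw [dotProduct_comm c x]
    exact mul_nonneg hr (mul_self_nonneg _)

lemma trace_eq_sum_eig {d : ℕ} {A : Matrix (Fin d) (Fin d) ℝ} (hA : A.IsHermitian) :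
    A.trace = ∑ i, hA.eigenvalues i := by
  simpa using hA.trace_eq_sum_eigenvalues

lemma prod_le_pow_avg {d : ℕ} (hd : 0 < d) (f : Fin d → ℝ) (hf : ∀ i, 0 ≤ f i) :
    ∏ i, f i ≤ ((∑ i, f i) / d) ^ d := by
  have hw : ∑ _i : Fin d, (1 / (d:ℝ)) = 1 := by
    simp [Finset.sum_const]
    field_simp
  have hgm := Real.geom_mean_le_arith_mean_weighted Finset.univ (fun _ => 1/(d:ℝ)) f
    (fun i _ => by positivity) hw (fun i _ => hf i)
  have hrhs : ∑ i, (1/(d:ℝ)) * f i = (∑ i, f i) / d := by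
    rw [Finset.sum_div]; refine Finset.sum_congr rfl fun i _ => ?_; ring
  have key : ∏ i, f i = (∏ i, f i ^ (1/(d:ℝ))) ^ d := by
    rw [← Finset.prod_pow]
    refine Finset.prod_congr rfl fun i _ => ?_
    rw [← Real.rpow_natCast (f i ^ (1/(d:ℝ))) d, ← Real.rpow_mul (hf i), one_div,
      inv_mul_cancel₀ (Nat.cast_ne_zero.mpr hd.ne' : (d:ℝ) ≠ 0), Real.rpow_one]
  rw [key, ← hrhs]
  exact pow_le_pow_left₀ (Finset.prod_nonneg fun i _ => Real.rpow_nonneg (hf i) _) hgm d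

lemma half_le_log {t : ℝ} (h0 : 0 ≤ t) (h1 : t ≤ 1) : t / 2 ≤ Real.log (1 + t) := by
  have hc := strictConcaveOn_log_Ioi.concaveOn.2 (Set.mem_Ioi.mpr one_pos)
    (Set.mem_Ioi.mpr two_pos) (by linarith : (0:ℝ) ≤ 1 - t) h0 (by ring)
  simp only [smul_eq_mul, mul_one, Real.log_one] at hc
  have h2 : 1 - t + t * 2 = 1 + t := by ring
  rw [h2] at hc
  have hl2 : (0.5:ℝ) ≤ Real.log 2 := by
    have := Real.log_two_gt_d9; linarith
  nlinarith [hc]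

lemma det_one_add_const {inst : DecidableEq (Fin 1)} (x : ℝ) :
    @Matrix.det (Fin 1) inst _ ℝ _ (1 + Matrix.of fun _ _ => x) = 1 + x := by
  have h : inst = instDecidableEqFin 1 := Subsingleton.elim _ _
  subst h
  rw [Matrix.det_unique]
  simp


/-- Elliptical potential counting lemma: for any `a > 0`, the number of indices `m` with
`n_m ≥ 1` and `‖c_m‖_{V_m⁻¹} ≥ a` is at most `(2d/a²) log (1 + τ/(λ d))`. -/
theorem elliptical_potential_count {d M : ℕ} (hd : 1 ≤ d) (lam : ℝ) (hlam : 1 ≤ lam)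
    (c : ℕ → Fin d → ℝ) (n : ℕ → ℕ)
    (V : ℕ → Matrix (Fin d) (Fin d) ℝ)
    (hc : ∀ m, 1 ≤ m → m ≤ M → Real.sqrt (∑ k, c m k ^ 2) ≤ 1)
    (hV1 : V 1 = lam • (1 : Matrix (Fin d) (Fin d) ℝ))
    (hVrec : ∀ m, 1 ≤ m → m ≤ M →
      V (m + 1) = V m + (n m : ℝ) • vecMulVec (c m) (c m))
    (hsmall : ∀ m, 1 ≤ m → m ≤ M →
      (n m : ℝ) * (c m ⬝ᵥ (V m)⁻¹.mulVec (c m)) ≤ 1)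
    (a : ℝ) (ha : 0 < a) :
    (((Finset.Icc 1 M).filter (fun m =>
        1 ≤ n m ∧ a ≤ Real.sqrt (c m ⬝ᵥ (V m)⁻¹.mulVec (c m)))).card : ℝ) ≤
      (2 * d / a ^ 2) *
        Real.log (1 + ((∑ m ∈ Finset.Icc 1 M, n m : ℕ) : ℝ) / (lam * d)) := by
  classical
  set w : ℕ → ℝ := fun m => c m ⬝ᵥ (V m)⁻¹.mulVec (c m) with hwdef
  have hd0 : 0 < d := hd
  have hdR : (0:ℝ) < d := by exact_mod_cast hd0
  have hlam0 : (0:ℝ) < lam := lt_of_lt_of_le one_pos hlam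
  have key : ∀ m, m ≤ M → (V (m+1)).PosDef ∧
      (V (m+1)).det = lam ^ d * ∏ k ∈ Finset.Icc 1 m, (1 + (n k : ℝ) * w k) ∧
      (V (m+1)).trace = lam * d + ∑ k ∈ Finset.Icc 1 m, (n k : ℝ) * (∑ j, c k j ^ 2) := by
    intro m
    induction m with
    | zero =>
      intro _
      have hempty : Finset.Icc 1 0 = (∅ : Finset ℕ) := Finset.Icc_eq_empty (by omega)
      refine ⟨?_, ?_, ?_⟩
      · rw [hV1, Matrix.smul_one_eq_diagonal]
        exact Matrix.PosDef.diagonal fun _ => hlam0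
      · rw [hV1, Matrix.det_smul, Matrix.det_one, hempty]
        simp [Fintype.card_fin]
      · rw [hV1, Matrix.trace_smul, Matrix.trace_one, hempty]
        simp [Fintype.card_fin, mul_comm]
    | succ m ih =>
      intro hm
      obtain ⟨hpd, hdet, htr⟩ := ih (Nat.le_of_succ_le hm)
      have h1m : 1 ≤ m + 1 := Nat.le_add_left 1 m
      have hrec := hVrec (m+1) h1m hm
      have hpsd := psd_smul_vecMulVec ((n (m+1) : ℝ)) (Nat.cast_nonneg _) (c (m+1))
      have hpd' : (V (m+1+1)).PosDef := by rw [hrec]; exact hpd.add_posSemidef hpsd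
      refine ⟨hpd', ?_, ?_⟩
      · have hsm : ((n (m+1) : ℝ) • vecMulVec (c (m+1)) (c (m+1)))
            = replicateCol (Fin 1) ((n (m+1) : ℝ) • c (m+1)) * replicateRow (Fin 1) (c (m+1)) := by
          erw [← vecMulVec_eq (Fin 1)]
          ext i j
          simp only [vecMulVec_apply, Matrix.smul_apply, Pi.smul_apply, smul_eq_mul]
          ring
        have hdl := Matrix.det_add_replicateCol_mul_replicateRow (ι := Fin 1)
          hpd.det_pos.ne'.isUnit ((n (m+1) : ℝ) • c (m+1)) (c (m+1))
        have hent : (replicateRow (Fin 1) (c (m+1)) * (V (m+1))⁻¹ *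
            replicateCol (Fin 1) ((n (m+1):ℝ) • c (m+1))) = Matrix.of (fun _ _ : Fin 1 =>
              (c (m+1) ᵥ* (V (m+1))⁻¹) ⬝ᵥ ((n (m+1):ℝ) • c (m+1))) := by
          rw [← Matrix.replicateRow_vecMul, Matrix.replicateRow_mul_replicateCol]
        rw [hrec, hsm]
        erw [hdl]
        rw [hdet, hent]
        erw [det_one_add_const]
        rw [dotProduct_smul, ← Matrix.dotProduct_mulVec]
        have hww : c (m+1) ⬝ᵥ (V (m+1))⁻¹ *ᵥ c (m+1) = w (m+1) := rfl
        rw [hww, Finset.prod_Icc_succ_top h1m]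
        simp only [smul_eq_mul]
        ring
      · rw [hrec, Matrix.trace_add, Matrix.trace_smul, htr]
        have htrv : (vecMulVec (c (m+1)) (c (m+1))).trace = ∑ j, c (m+1) j ^ 2 := by
          simp [Matrix.trace, Matrix.diag, vecMulVec_apply, sq]
        rw [htrv, Finset.sum_Icc_succ_top h1m]
        simp only [smul_eq_mul]
        ring
  obtain ⟨hpdM, hdetM, htrM⟩ := key M le_rfl
  set τ : ℝ := ((∑ m ∈ Finset.Icc 1 M, n m : ℕ) : ℝ) with hτdef
  have hτ0 : (0:ℝ) ≤ τ := Nat.cast_nonneg _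
  have hτ : ∑ k ∈ Finset.Icc 1 M, (n k : ℝ) * (∑ j, c k j ^ 2) ≤ τ := by
    rw [hτdef]
    push_cast
    apply Finset.sum_le_sum
    intro k hk
    obtain ⟨h1k, hkM⟩ := Finset.mem_Icc.mp hk
    have hs0 : 0 ≤ ∑ j, c k j ^ 2 := Finset.sum_nonneg fun j _ => sq_nonneg _
    have hs1 : ∑ j, c k j ^ 2 ≤ 1 := by
      nlinarith [Real.sq_sqrt hs0, Real.sqrt_nonneg (∑ j, c k j ^ 2), hc k h1k hkM]
    nlinarith [Nat.cast_nonneg (α := ℝ) (n k)]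
  have hVpd : ∀ k, 1 ≤ k → k ≤ M → (V k).PosDef := by
    intro k h1 h2
    have := (key (k-1) (by omega)).1
    rwa [Nat.sub_add_cancel h1] at this
  have hw0 : ∀ k, 1 ≤ k → k ≤ M → 0 ≤ w k := by
    intro k h1 h2
    have := ((hVpd k h1 h2).inv.posSemidef).dotProduct_mulVec_nonneg (c k)
    simpa [hwdef] using this
  have hdet_le : (V (M+1)).det ≤ ((lam * d + τ)/d)^d := by
    rw [hpdM.isHermitian.det_eq_prod_eigenvalues]
    have heig : ∀ i, 0 ≤ hpdM.isHermitian.eigenvalues i := fun i => (hpdM.eigenvalues_pos i).le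
    have h1 : (∏ i, (hpdM.isHermitian.eigenvalues i : ℝ)) ≤
        ((∑ i, hpdM.isHermitian.eigenvalues i)/d)^d :=
      prod_le_pow_avg hd0 _ heig
    have h2 : ∑ i, hpdM.isHermitian.eigenvalues i ≤ lam * d + τ := by
      rw [← trace_eq_sum_eig hpdM.isHermitian, htrM]; linarith
    calc (∏ i, (hpdM.isHermitian.eigenvalues i : ℝ)) ≤
        ((∑ i, hpdM.isHermitian.eigenvalues i)/d)^d := h1
      _ ≤ ((lam * d + τ)/d)^d := by
          apply pow_le_pow_left₀ (div_nonneg (Finset.sum_nonneg fun i _ => heig i) hdR.le)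
          gcongr
  have hprod : ∏ k ∈ Finset.Icc 1 M, (1 + (n k:ℝ) * w k) ≤ (1 + τ/(lam*d))^d := by
    have h1 : lam ^ d * ∏ k ∈ Finset.Icc 1 M, (1 + (n k:ℝ) * w k) ≤ ((lam*d+τ)/d)^d := by
      rw [← hdetM]; exact hdet_le
    have h2 : ((lam*↑d+τ)/↑d)^d = lam^d * (1 + τ/(lam*↑d))^d := by
      rw [← mul_pow]
      congr 1
      field_simp
    rw [h2] at h1
    exact le_of_mul_le_mul_left h1 (pow_pos hlam0 d)
  have hL0 : 0 ≤ Real.log (1 + τ/(lam*d)) := by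
    apply Real.log_nonneg
    have : (0:ℝ) ≤ τ/(lam*↑d) := div_nonneg hτ0 (by positivity)
    linarith
  set s := (Finset.Icc 1 M).filter (fun m =>
      1 ≤ n m ∧ a ≤ Real.sqrt (c m ⬝ᵥ (V m)⁻¹.mulVec (c m))) with hsdef
  by_cases hN : s.card = 0
  · rw [hN]
    simp only [Nat.cast_zero]
    exact mul_nonneg (by positivity) hL0
  · obtain ⟨m0, hm0⟩ := Finset.card_pos.mp (Nat.pos_of_ne_zero hN)
    rw [hsdef, Finset.mem_filter, Finset.mem_Icc] at hm0
    obtain ⟨⟨h1m0, hm0M⟩, hn0, ha0⟩ := hm0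
    have hw0m : 0 ≤ w m0 := hw0 m0 h1m0 hm0M
    have haw : ∀ k, a ≤ Real.sqrt (c k ⬝ᵥ (V k)⁻¹.mulVec (c k)) → 1 ≤ k → k ≤ M →
        a^2 ≤ w k := by
      intro k hk h1 h2
      have h3 : a^2 ≤ (Real.sqrt (w k))^2 := pow_le_pow_left₀ ha.le hk 2
      rwa [Real.sq_sqrt (hw0 k h1 h2)] at h3
    have ha2 : a^2 ≤ 1 := by
      have h1 := haw m0 ha0 h1m0 hm0M
      have h2 := hsmall m0 h1m0 hm0M
      have h3 : w m0 ≤ (n m0:ℝ) * w m0 :=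
        le_mul_of_one_le_left hw0m (by exact_mod_cast hn0)
      calc a^2 ≤ w m0 := h1
        _ ≤ (n m0:ℝ) * w m0 := h3
        _ ≤ 1 := h2
    have hpow : (1 + a^2) ^ s.card ≤ ∏ k ∈ Finset.Icc 1 M, (1 + (n k:ℝ) * w k) := by
      calc (1 + a^2) ^ s.card ≤ ∏ k ∈ s, (1 + (n k:ℝ) * w k) := by
            rw [← Finset.prod_const]
            apply Finset.prod_le_prod (fun k _ => by positivity)
            intro k hk
            rw [hsdef, Finset.mem_filter, Finset.mem_Icc] at hk
            obtain ⟨⟨h1k, hkM⟩, hnk, hak⟩ := hk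
            have h1 := haw k hak h1k hkM
            have h3 : w k ≤ (n k:ℝ) * w k :=
              le_mul_of_one_le_left (hw0 k h1k hkM) (by exact_mod_cast hnk)
            linarith
        _ ≤ ∏ k ∈ Finset.Icc 1 M, (1 + (n k:ℝ) * w k) := by
            have hsub : s ⊆ Finset.Icc 1 M := by rw [hsdef]; exact Finset.filter_subset _ _
            have hge1 : ∀ k ∈ Finset.Icc 1 M, (1:ℝ) ≤ 1 + (n k:ℝ) * w k := by
              intro k hk
              obtain ⟨h1k, hkM⟩ := Finset.mem_Icc.mp hk
              have h0 : 0 ≤ (n k:ℝ) * w k := mul_nonneg (Nat.cast_nonneg _) (hw0 k h1k hkM)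
              linarith
            rw [← Finset.prod_sdiff hsub]
            have h1 : (1:ℝ) ≤ ∏ k ∈ Finset.Icc 1 M \ s, (1 + (n k:ℝ) * w k) := by
              calc (1:ℝ) = ∏ _k ∈ Finset.Icc 1 M \ s, (1:ℝ) := by
                    rw [Finset.prod_const_one]
                _ ≤ _ := Finset.prod_le_prod (fun k _ => zero_le_one)
                    (fun k hk => hge1 k (Finset.mem_sdiff.mp hk).1)
            have h2 : 0 ≤ ∏ k ∈ s, (1 + (n k:ℝ) * w k) :=
              Finset.prod_nonneg fun k hk => le_trans zero_le_one (hge1 k (hsub hk))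
            exact le_mul_of_one_le_left h2 h1
    have hlog : (s.card:ℝ) * Real.log (1 + a^2) ≤ d * Real.log (1 + τ/(lam*d)) := by
      have h := Real.log_le_log (by positivity) (hpow.trans hprod)
      rwa [Real.log_pow, Real.log_pow] at h
    have hla := half_le_log (sq_nonneg a) ha2
    have hmain : (s.card:ℝ) * (a^2/2) ≤ d * Real.log (1 + τ/(lam*↑d)) :=
      le_trans (mul_le_mul_of_nonneg_left hla (Nat.cast_nonneg _)) hlog
    have heq : (2*(d:ℝ)/a^2) * Real.log (1 + τ/(lam*↑d)) =
        ((d:ℝ) * Real.log (1 + τ/(lam*↑d))) / (a^2/2) := by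
      field_simp
    rw [heq, le_div_iff₀ (by positivity)]
    linarith
end

section
/- Under the elliptical potential setting, Σ_{m=1}^M n_m · ‖c_m‖_{V_m⁻¹} ≤ √τ · √(2·d·log(1 + τ/(λ·d))). -/
open Matrix

private lemma log_lb {x : ℝ} (h0 : 0 ≤ x) (h1 : x ≤ 1) : x ≤ 2 * Real.log (1 + x) := by
  have hx1 : (0:ℝ) < 1 + x := by linarith
  have h := Real.log_le_sub_one_of_pos (inv_pos.mpr hx1)
  rw [Real.log_inv] at h
  have hinv : (1 + x) * (1 + x)⁻¹ = 1 := mul_inv_cancel₀ hx1.ne'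
  nlinarith [mul_nonneg h0 (by linarith : (0:ℝ) ≤ 1 - x)]

private lemma det_le_pow_trace {d : ℕ} (hd : 0 < d) {A : Matrix (Fin d) (Fin d) ℝ}
    (hA : A.PosSemidef) : A.det ≤ (A.trace / d) ^ d := by
  have hH := hA.1
  have hev : ∀ i, 0 ≤ hH.eigenvalues i := hA.eigenvalues_nonneg
  have hdet : A.det = ∏ i, hH.eigenvalues i := by
    simpa [RCLike.ofReal_real_eq_id] using hH.det_eq_prod_eigenvalues
  have htr : A.trace = ∑ i, hH.eigenvalues i := by
    simpa [RCLike.ofReal_real_eq_id] using hH.trace_eq_sum_eigenvalues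
  have key := Real.geom_mean_le_arith_mean_weighted Finset.univ (fun _ => (d:ℝ)⁻¹)
    hH.eigenvalues (fun i _ => by positivity)
    (by simp [Finset.card_univ]; field_simp) (fun i _ => hev i)
  have hdd : (d:ℝ) ≠ 0 := Nat.cast_ne_zero.mpr hd.ne'
  have hrw : ∀ i : Fin d, (hH.eigenvalues i ^ ((d:ℝ)⁻¹)) ^ d = hH.eigenvalues i := by
    intro i
    rw [← Real.rpow_natCast (hH.eigenvalues i ^ ((d:ℝ)⁻¹)) d, ← Real.rpow_mul (hev i),
      inv_mul_cancel₀ hdd, Real.rpow_one]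
  calc A.det = ∏ i, (hH.eigenvalues i ^ ((d:ℝ)⁻¹)) ^ d := by
        rw [hdet]; exact Finset.prod_congr rfl fun i _ => (hrw i).symm
    _ = (∏ i, hH.eigenvalues i ^ ((d:ℝ)⁻¹)) ^ d := by rw [Finset.prod_pow]
    _ ≤ (A.trace / d) ^ d := by
        apply pow_le_pow_left₀ (Finset.prod_nonneg fun i _ => Real.rpow_nonneg (hev i) _)
        calc (∏ i, hH.eigenvalues i ^ ((d:ℝ)⁻¹)) ≤ ∑ i, (d:ℝ)⁻¹ * hH.eigenvalues i := key
          _ = A.trace / d := by rw [htr, ← Finset.mul_sum]; ring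

/-- Elliptical potential lemma (weighted norms):
`∑_{m=1}^M n_m ‖c_m‖_{V_m⁻¹} ≤ √τ √(2 d log (1 + τ/(λ d)))`. -/
theorem elliptical_potential_sqrt_sum {d M : ℕ} (hd : 1 ≤ d) (lam : ℝ) (hlam : 1 ≤ lam)
    (c : ℕ → Fin d → ℝ) (n : ℕ → ℕ)
    (V : ℕ → Matrix (Fin d) (Fin d) ℝ)
    (hc : ∀ m, 1 ≤ m → m ≤ M → Real.sqrt (∑ k, c m k ^ 2) ≤ 1)
    (hV1 : V 1 = lam • (1 : Matrix (Fin d) (Fin d) ℝ))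
    (hVrec : ∀ m, 1 ≤ m → m ≤ M →
      V (m + 1) = V m + (n m : ℝ) • vecMulVec (c m) (c m))
    (hsmall : ∀ m, 1 ≤ m → m ≤ M →
      (n m : ℝ) * (c m ⬝ᵥ (V m)⁻¹.mulVec (c m)) ≤ 1) :
    ∑ m ∈ Finset.Icc 1 M, (n m : ℝ) * Real.sqrt (c m ⬝ᵥ (V m)⁻¹.mulVec (c m)) ≤
      Real.sqrt ((∑ m ∈ Finset.Icc 1 M, n m : ℕ) : ℝ) *
        Real.sqrt (2 * d *
          Real.log (1 + ((∑ m ∈ Finset.Icc 1 M, n m : ℕ) : ℝ) / (lam * d))) := by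
  have hlam0 : (0:ℝ) < lam := lt_of_lt_of_le one_pos hlam
  have hd0 : (0:ℝ) < d := Nat.cast_pos.mpr hd
  -- key induction
  have key : ∀ j, 1 ≤ j → j ≤ M + 1 →
      (V j).PosDef ∧
      (V j).det = lam ^ d *
        ∏ m ∈ Finset.Ico 1 j, (1 + (n m : ℝ) * (c m ⬝ᵥ (V m)⁻¹.mulVec (c m))) ∧
      (V j).trace = lam * d + ∑ m ∈ Finset.Ico 1 j, (n m : ℝ) * (∑ k, c m k ^ 2) := by
    intro j hj1
    induction j, hj1 using Nat.le_induction with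
    | base =>
      intro _
      refine ⟨?_, ?_, ?_⟩
      · rw [hV1, smul_one_eq_diagonal]
        exact Matrix.PosDef.diagonal fun _ => hlam0
      · simp [hV1, det_smul]
      · simp [hV1, trace_smul, trace_one, smul_eq_mul]
    | succ j hj ih =>
      intro hjM
      obtain ⟨hpd, hdet, htr⟩ := ih (by omega)
      have hm2 : j ≤ M := by omega
      have hs : Real.sqrt (n j) * Real.sqrt (n j) = (n j : ℝ) :=
        Real.mul_self_sqrt (Nat.cast_nonneg _)
      have hpsd : ((n j : ℝ) • vecMulVec (c j) (c j)).PosSemidef := by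
        have h1 : (n j : ℝ) • vecMulVec (c j) (c j) =
            (replicateRow Unit (Real.sqrt (n j) • c j))ᴴ * replicateRow Unit (Real.sqrt (n j) • c j) := by
          rw [conjTranspose_replicateRow]
          ext i k
          simp only [Matrix.smul_apply, vecMulVec_apply, smul_eq_mul, Matrix.mul_apply,
            Finset.univ_unique, Finset.sum_singleton, replicateCol_apply, replicateRow_apply,
            Pi.smul_apply, Pi.star_apply, star_trivial]
          ring_nf; rw [Real.sq_sqrt (Nat.cast_nonneg (n j))]; ring
        rw [h1]; exact posSemidef_conjTranspose_mul_self _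
      refine ⟨?_, ?_, ?_⟩
      · rw [hVrec j hj hm2]
        exact hpd.add_posSemidef hpsd
      · have hu : (n j : ℝ) • vecMulVec (c j) (c j) =
            replicateCol Unit ((n j : ℝ) • c j) * replicateRow Unit (c j) := by
          rw [← vecMulVec_eq]
          ext i k
          simp [vecMulVec_apply, smul_eq_mul, mul_assoc]
        have hunit : IsUnit (V j).det := isUnit_iff_ne_zero.mpr hpd.det_pos.ne'
        rw [hVrec j hj hm2, hu, det_add_replicateCol_mul_replicateRow hunit,
          det_unique (A := 1 + replicateRow Unit (c j) * (V j)⁻¹ * replicateCol Unit ((n j : ℝ) • c j)),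
          Matrix.add_apply, Matrix.one_apply_eq, ← replicateRow_vecMul, replicateRow_mul_replicateCol_apply,
          dotProduct_smul, smul_eq_mul, ← Matrix.dotProduct_mulVec, hdet,
          Finset.prod_Ico_succ_top hj, mul_assoc]
      · rw [hVrec j hj hm2, trace_add, trace_smul, htr, Finset.sum_Ico_succ_top hj]
        have htrv : (vecMulVec (c j) (c j)).trace = ∑ k, c j k ^ 2 := by
          simp [Matrix.trace, Matrix.diag, vecMulVec_apply, sq]
        rw [htrv, smul_eq_mul]
        ring
  obtain ⟨hpdM, hdetM, htrM⟩ := key (M + 1) (by omega) le_rfl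
  rw [Finset.Ico_add_one_right_eq_Icc] at hdetM htrM
  have hxnn : ∀ m ∈ Finset.Icc 1 M, 0 ≤ c m ⬝ᵥ (V m)⁻¹.mulVec (c m) := by
    intro m hm
    rw [Finset.mem_Icc] at hm
    have hpd := (key m hm.1 (by omega)).1
    have := hpd.inv.posSemidef.re_dotProduct_nonneg (c m)
    simpa using this
  -- Cauchy-Schwarz
  have hCS : ∑ m ∈ Finset.Icc 1 M, (n m : ℝ) * Real.sqrt (c m ⬝ᵥ (V m)⁻¹.mulVec (c m)) ≤
      Real.sqrt (∑ m ∈ Finset.Icc 1 M, (n m : ℝ)) *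
        Real.sqrt (∑ m ∈ Finset.Icc 1 M, (n m : ℝ) * (c m ⬝ᵥ (V m)⁻¹.mulVec (c m))) := by
    have h := Real.sum_sqrt_mul_sqrt_le (Finset.Icc 1 M)
      (f := fun m => (n m : ℝ))
      (g := fun m => (n m : ℝ) * max (c m ⬝ᵥ (V m)⁻¹.mulVec (c m)) 0)
      (fun m => Nat.cast_nonneg _)
      (fun m => mul_nonneg (Nat.cast_nonneg _) (le_max_right _ _))
    have e1 : ∀ m ∈ Finset.Icc 1 M, (n m : ℝ) * Real.sqrt (c m ⬝ᵥ (V m)⁻¹.mulVec (c m)) =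
        Real.sqrt (n m) * Real.sqrt ((n m : ℝ) * max (c m ⬝ᵥ (V m)⁻¹.mulVec (c m)) 0) := by
      intro m hm
      rw [max_eq_left (hxnn m hm), Real.sqrt_mul (Nat.cast_nonneg _), ← mul_assoc,
        Real.mul_self_sqrt (Nat.cast_nonneg _)]
    rw [Finset.sum_congr rfl e1, show
      (∑ m ∈ Finset.Icc 1 M, (n m : ℝ) * (c m ⬝ᵥ (V m)⁻¹.mulVec (c m))) =
      ∑ m ∈ Finset.Icc 1 M, (n m : ℝ) * max (c m ⬝ᵥ (V m)⁻¹.mulVec (c m)) 0 from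
      Finset.sum_congr rfl fun m hm => by rw [max_eq_left (hxnn m hm)]]
    exact h
  -- bound the quadratic sum
  have hpos : ∀ m ∈ Finset.Icc 1 M,
      (0:ℝ) < 1 + (n m : ℝ) * (c m ⬝ᵥ (V m)⁻¹.mulVec (c m)) := by
    intro m hm
    have := mul_nonneg (Nat.cast_nonneg (n m)) (hxnn m hm)
    linarith
  have h1 : ∑ m ∈ Finset.Icc 1 M, (n m : ℝ) * (c m ⬝ᵥ (V m)⁻¹.mulVec (c m)) ≤
      2 * ∑ m ∈ Finset.Icc 1 M,
        Real.log (1 + (n m : ℝ) * (c m ⬝ᵥ (V m)⁻¹.mulVec (c m))) := by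
    rw [Finset.mul_sum]
    refine Finset.sum_le_sum fun m hm => ?_
    rw [Finset.mem_Icc] at hm
    exact log_lb (mul_nonneg (Nat.cast_nonneg _) (hxnn m (Finset.mem_Icc.mpr hm)))
      (hsmall m hm.1 hm.2)
  have h2 : ∑ m ∈ Finset.Icc 1 M,
      Real.log (1 + (n m : ℝ) * (c m ⬝ᵥ (V m)⁻¹.mulVec (c m))) =
      Real.log ((V (M+1)).det / lam ^ d) := by
    rw [← Real.log_prod fun m hm => (hpos m hm).ne', hdetM]
    field_simp
  have hdpos := hpdM.det_pos
  have htau : (0:ℝ) ≤ ((∑ m ∈ Finset.Icc 1 M, n m : ℕ) : ℝ) := Nat.cast_nonneg _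
  have htrle : (V (M+1)).trace ≤ lam * d + ((∑ m ∈ Finset.Icc 1 M, n m : ℕ) : ℝ) := by
    rw [htrM, Nat.cast_sum]
    have : ∑ m ∈ Finset.Icc 1 M, (n m : ℝ) * (∑ k, c m k ^ 2) ≤
        ∑ m ∈ Finset.Icc 1 M, (n m : ℝ) := by
      refine Finset.sum_le_sum fun m hm => ?_
      rw [Finset.mem_Icc] at hm
      have hnn : (0:ℝ) ≤ ∑ k, c m k ^ 2 := by positivity
      have hcc : (∑ k, c m k ^ 2) ≤ 1 := by
        nlinarith [Real.sq_sqrt hnn, hc m hm.1 hm.2, Real.sqrt_nonneg (∑ k, c m k ^ 2)]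
      nlinarith [(Nat.cast_nonneg (n m) : (0:ℝ) ≤ (n m : ℝ))]
    linarith
  have htrnn : (0:ℝ) ≤ (V (M+1)).trace / d := by
    have : (0:ℝ) < (V (M+1)).trace := by
      have := hpdM.posSemidef
      -- trace positive from formula
      rw [htrM]
      have hsum : (0:ℝ) ≤ ∑ m ∈ Finset.Icc 1 M, (n m : ℝ) * (∑ k, c m k ^ 2) := by
        exact Finset.sum_nonneg fun m hm =>
          mul_nonneg (Nat.cast_nonneg _) (Finset.sum_nonneg fun k _ => sq_nonneg _)
      nlinarith
    positivity
  have hXpos : (0:ℝ) < (lam * d + ((∑ m ∈ Finset.Icc 1 M, n m : ℕ) : ℝ)) / d := by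
    have : (0:ℝ) < lam * d := by positivity
    positivity
  have hdetle : Real.log (V (M+1)).det ≤
      d * Real.log ((lam * d + ((∑ m ∈ Finset.Icc 1 M, n m : ℕ) : ℝ)) / d) := by
    have hle : (V (M+1)).det ≤
        ((lam * d + ((∑ m ∈ Finset.Icc 1 M, n m : ℕ) : ℝ)) / d) ^ d := by
      refine le_trans (det_le_pow_trace hd hpdM.posSemidef) ?_
      exact pow_le_pow_left₀ htrnn (by gcongr) d
    calc Real.log (V (M+1)).det ≤
        Real.log (((lam * d + ((∑ m ∈ Finset.Icc 1 M, n m : ℕ) : ℝ)) / d) ^ d) :=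
          Real.log_le_log hdpos hle
      _ = _ := by rw [Real.log_pow]
  have hiden : Real.log (1 + ((∑ m ∈ Finset.Icc 1 M, n m : ℕ) : ℝ) / (lam * d)) =
      Real.log ((lam * d + ((∑ m ∈ Finset.Icc 1 M, n m : ℕ) : ℝ)) / d) - Real.log lam := by
    have heq : 1 + ((∑ m ∈ Finset.Icc 1 M, n m : ℕ) : ℝ) / (lam * d) =
        ((lam * d + ((∑ m ∈ Finset.Icc 1 M, n m : ℕ) : ℝ)) / d) / lam := by
      rw [div_div, eq_div_iff (by positivity : ((d : ℝ) * lam) ≠ 0)]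
      field_simp
    rw [heq, Real.log_div hXpos.ne' hlam0.ne']
  have hbound : ∑ m ∈ Finset.Icc 1 M, (n m : ℝ) * (c m ⬝ᵥ (V m)⁻¹.mulVec (c m)) ≤
      2 * d * Real.log (1 + ((∑ m ∈ Finset.Icc 1 M, n m : ℕ) : ℝ) / (lam * d)) := by
    have hld : Real.log ((V (M+1)).det / lam ^ d) =
        Real.log (V (M+1)).det - d * Real.log lam := by
      rw [Real.log_div hdpos.ne' (by positivity), Real.log_pow]
    rw [hiden]
    calc ∑ m ∈ Finset.Icc 1 M, (n m : ℝ) * (c m ⬝ᵥ (V m)⁻¹.mulVec (c m)) ≤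
        2 * ∑ m ∈ Finset.Icc 1 M,
          Real.log (1 + (n m : ℝ) * (c m ⬝ᵥ (V m)⁻¹.mulVec (c m))) := h1
      _ = 2 * (Real.log (V (M+1)).det - d * Real.log lam) := by rw [h2, hld]
      _ ≤ 2 * (d * Real.log ((lam * d + ((∑ m ∈ Finset.Icc 1 M, n m : ℕ) : ℝ)) / d)
            - d * Real.log lam) := by linarith
      _ = 2 * d * (Real.log ((lam * d + ((∑ m ∈ Finset.Icc 1 M, n m : ℕ) : ℝ)) / d)
            - Real.log lam) := by ring
  calc ∑ m ∈ Finset.Icc 1 M, (n m : ℝ) * Real.sqrt (c m ⬝ᵥ (V m)⁻¹.mulVec (c m)) ≤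
      Real.sqrt (∑ m ∈ Finset.Icc 1 M, (n m : ℝ)) *
        Real.sqrt (∑ m ∈ Finset.Icc 1 M, (n m : ℝ) * (c m ⬝ᵥ (V m)⁻¹.mulVec (c m))) := hCS
    _ ≤ Real.sqrt ((∑ m ∈ Finset.Icc 1 M, n m : ℕ) : ℝ) *
        Real.sqrt (2 * d *
          Real.log (1 + ((∑ m ∈ Finset.Icc 1 M, n m : ℕ) : ℝ) / (lam * d))) := by
      rw [show (∑ m ∈ Finset.Icc 1 M, (n m : ℝ)) =
        ((∑ m ∈ Finset.Icc 1 M, n m : ℕ) : ℝ) from (Nat.cast_sum _ _).symm]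
      exact mul_le_mul_of_nonneg_left (Real.sqrt_le_sqrt hbound) (Real.sqrt_nonneg _)
end

section
/- Let V be a d×d real symmetric positive definite matrix, let P★, P̂ ∈ ℝ^{n×d}, and let β ≥ 0. If tr((P★ − P̂) V (P★ − P̂)ᵀ) ≤ n·β², then for every c ∈ ℝ^d, the ℓ1 norm of the vector (P★ − P̂)·c satisfies ‖(P★ − P̂)·c‖₁ ≤ n·β·√(cᵀ V⁻¹ c). -/
open Matrix

/-- Cauchy–Schwarz for the bilinear form of a positive semidefinite real matrix. -/
lemma psd_cauchy_schwarz {d : ℕ} (M : Matrix (Fin d) (Fin d) ℝ) (hM : M.PosSemidef)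
    (x y : Fin d → ℝ) :
    (x ⬝ᵥ M.mulVec y) ^ 2 ≤ (x ⬝ᵥ M.mulVec x) * (y ⬝ᵥ M.mulVec y) := by
  have hsymm : y ⬝ᵥ M.mulVec x = x ⬝ᵥ M.mulVec y := by
    rw [Matrix.dotProduct_mulVec, ← Matrix.mulVec_transpose]
    have : Mᵀ = M := by
      have := hM.1
      simpa [Matrix.IsHermitian, Matrix.conjTranspose_eq_transpose_of_trivial] using this
    rw [this, dotProduct_comm]
  have key : ∀ t : ℝ,
      0 ≤ (y ⬝ᵥ M.mulVec y) * (t * t) + (2 * (x ⬝ᵥ M.mulVec y)) * t + (x ⬝ᵥ M.mulVec x) := by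
    intro t
    have h0 := hM.dotProduct_mulVec_nonneg (x + t • y)
    simp only [star_trivial] at h0
    have hexp : (x + t • y) ⬝ᵥ M.mulVec (x + t • y)
        = (y ⬝ᵥ M.mulVec y) * (t * t) + (2 * (x ⬝ᵥ M.mulVec y)) * t + (x ⬝ᵥ M.mulVec x) := by
      simp only [Matrix.mulVec_add, Matrix.mulVec_smul, add_dotProduct,
        dotProduct_add, smul_dotProduct, dotProduct_smul, smul_eq_mul]
      rw [hsymm]; ring
    rw [hexp] at h0
    exact h0
  have hd := discrim_le_zero key
  rw [discrim] at hd
  nlinarith [hd]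

/-- If `tr((P★ − P̂) V (P★ − P̂)ᵀ) ≤ n β²` with `V` symmetric positive definite, then for
every `c`, `‖(P★ − P̂) c‖₁ ≤ n β √(cᵀ V⁻¹ c)`. -/
theorem l1_error_bound {n d : ℕ}
    (V : Matrix (Fin d) (Fin d) ℝ) (hV : V.PosDef)
    (Pstar Phat : Matrix (Fin n) (Fin d) ℝ) (β : ℝ) (hβ : 0 ≤ β)
    (h : ((Pstar - Phat) * V * (Pstar - Phat)ᵀ).trace ≤ n * β ^ 2) :
    ∀ c : Fin d → ℝ,
      ∑ i, |(Pstar - Phat).mulVec c i| ≤ n * β * Real.sqrt (c ⬝ᵥ V⁻¹.mulVec c) := by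
  intro c
  set Δ := Pstar - Phat with hΔ
  have hVdet : V.det ≠ 0 := hV.det_pos.ne'
  have hVV : V * V⁻¹ = 1 := Matrix.mul_nonsing_inv V hVdet.isUnit
  -- quadratic form values of the rows
  set a : Fin n → ℝ := fun i => (Δ i) ⬝ᵥ V.mulVec (Δ i) with ha
  have ha_nonneg : ∀ i, 0 ≤ a i := fun i => by simpa using hV.posSemidef.dotProduct_mulVec_nonneg (Δ i)
  -- trace identity
  have htr : ((Δ * V * Δᵀ)).trace = ∑ i, a i := by
    rw [Matrix.trace]
    refine Finset.sum_congr rfl fun i _ => ?_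
    simp only [Matrix.diag_apply, Matrix.mul_apply, Matrix.transpose_apply, ha,
      dotProduct, Matrix.mulVec, Finset.sum_mul]
    rw [Finset.sum_comm]
    refine Finset.sum_congr rfl fun j _ => ?_
    rw [Finset.mul_sum]
    exact Finset.sum_congr rfl fun k _ => by ring
  have htrace : ∑ i, a i ≤ n * β ^ 2 := htr ▸ h
  set γ : ℝ := c ⬝ᵥ V⁻¹.mulVec c with hγ
  have hγ_nonneg : 0 ≤ γ := by simpa using hV.inv.posSemidef.dotProduct_mulVec_nonneg c
  -- pointwise bound
  have hpt : ∀ i, |Δ.mulVec c i| ≤ Real.sqrt (a i) * Real.sqrt γ := by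
    intro i
    have hcs := psd_cauchy_schwarz V hV.posSemidef (Δ i) (V⁻¹.mulVec c)
    have h1 : V.mulVec (V⁻¹.mulVec c) = c := by
      rw [Matrix.mulVec_mulVec, hVV, Matrix.one_mulVec]
    have h2 : (V⁻¹.mulVec c) ⬝ᵥ c = γ := dotProduct_comm _ _
    rw [h1, h2] at hcs
    have : Δ.mulVec c i = (Δ i) ⬝ᵥ c := rfl
    rw [this]
    calc |(Δ i) ⬝ᵥ c| = Real.sqrt (((Δ i) ⬝ᵥ c) ^ 2) := by
          rw [Real.sqrt_sq_eq_abs]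
      _ ≤ Real.sqrt (a i * γ) := Real.sqrt_le_sqrt hcs
      _ = Real.sqrt (a i) * Real.sqrt γ := Real.sqrt_mul (ha_nonneg i) _
  calc ∑ i, |Δ.mulVec c i| ≤ ∑ i, Real.sqrt (a i) * Real.sqrt γ :=
        Finset.sum_le_sum fun i _ => hpt i
    _ = (∑ i, Real.sqrt (a i)) * Real.sqrt γ := by rw [Finset.sum_mul]
    _ ≤ (Real.sqrt n * Real.sqrt (∑ i, a i)) * Real.sqrt γ := by
        refine mul_le_mul_of_nonneg_right ?_ (Real.sqrt_nonneg _)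
        have := Real.sum_sqrt_mul_sqrt_le (Finset.univ : Finset (Fin n))
          (f := fun _ : Fin n => (1 : ℝ)) (g := a) (fun _ => zero_le_one) ha_nonneg
        simpa using this
    _ ≤ (Real.sqrt n * Real.sqrt (n * β ^ 2)) * Real.sqrt γ := by
        refine mul_le_mul_of_nonneg_right
          (mul_le_mul_of_nonneg_left (Real.sqrt_le_sqrt htrace) (Real.sqrt_nonneg _))
          (Real.sqrt_nonneg _)
    _ = n * β * Real.sqrt γ := by
        rw [Real.sqrt_mul (by positivity), Real.sqrt_sq hβ, ← mul_assoc,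
          ← Real.sqrt_mul (by positivity), Real.sqrt_mul_self (by positivity)]
end

section
/- For every s ∈ S, the function V' := 4·Ṽ satisfies the Bellman inequality V'(s) ≥ ℓ(s) + Σ_{s'∈S} P(s' | s)·V'(s'). -/
/-- If `Ṽ` satisfies the Bellman equation for the approximate model `(ℓ̃, P̃)`, is bounded in
`[0, B★]`, and the approximate model is close to the true model `(ℓ, P)`, then `V' = 4 Ṽ`
satisfies the Bellman inequality `V'(s) ≥ ℓ(s) + ∑_{s'} P(s'|s) V'(s')` for the true model. -/
theorem four_times_optimistic_value_bellman
    {S : Type*} [Fintype S] [Nonempty S]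
    (ℓ ℓt : S → ℝ) (P Pt : S → S → ℝ) (Bstar : ℝ) (Vt : S → ℝ)
    (hℓpos : ∀ s, 0 < ℓ s)
    (hP : ∀ s s', 0 ≤ P s s') (hPsum : ∀ s, ∑ s', P s s' ≤ 1)
    (hPt : ∀ s s', 0 ≤ Pt s s') (hPtsum : ∀ s, ∑ s', Pt s s' ≤ 1)
    (hB : 0 < Bstar)
    (hVnonneg : ∀ s, 0 ≤ Vt s) (hVB : ∀ s, Vt s ≤ Bstar)
    (hbellman : ∀ s, Vt s = ℓt s + ∑ s', Pt s s' * Vt s')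
    (hPclose : ∀ s, ∑ s', |Pt s s' - P s s'| ≤ ℓ s / (2 * Bstar))
    (hℓclose : ∀ s, |ℓt s - ℓ s| ≤ ℓ s / 4) :
    ∀ s, ℓ s + ∑ s', P s s' * (4 * Vt s') ≤ 4 * Vt s := by
  intro s
  have h1 : ∑ s', (P s s' - Pt s s') * Vt s' ≤ ℓ s / 2 := by
    calc ∑ s', (P s s' - Pt s s') * Vt s'
        ≤ ∑ s', |Pt s s' - P s s'| * Bstar := by
          apply Finset.sum_le_sum
          intro i _
          have h2 : P s i - Pt s i ≤ |Pt s i - P s i| := by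
            rw [abs_sub_comm]; exact le_abs_self _
          calc (P s i - Pt s i) * Vt i ≤ |Pt s i - P s i| * Vt i :=
                mul_le_mul_of_nonneg_right h2 (hVnonneg i)
            _ ≤ |Pt s i - P s i| * Bstar :=
                mul_le_mul_of_nonneg_left (hVB i) (abs_nonneg _)
      _ = (∑ s', |Pt s s' - P s s'|) * Bstar := by rw [Finset.sum_mul]
      _ ≤ (ℓ s / (2 * Bstar)) * Bstar :=
          mul_le_mul_of_nonneg_right (hPclose s) hB.le
      _ = ℓ s / 2 := by field_simp
  have hℓt : ℓ s - ℓ s / 4 ≤ ℓt s := by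
    have := abs_le.mp (hℓclose s); linarith [this.1]
  have hdiff : ∑ s', P s s' * Vt s' - ∑ s', Pt s s' * Vt s' ≤ ℓ s / 2 := by
    rw [← Finset.sum_sub_distrib]
    calc ∑ s', (P s s' * Vt s' - Pt s s' * Vt s')
        = ∑ s', (P s s' - Pt s s') * Vt s' := by
          apply Finset.sum_congr rfl; intro i _; ring
      _ ≤ ℓ s / 2 := h1
  have hb := hbellman s
  have hsum4 : ∑ s', P s s' * (4 * Vt s') = 4 * ∑ s', P s s' * Vt s' := by
    rw [Finset.mul_sum]; apply Finset.sum_congr rfl; intro i _; ring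
  rw [hsum4, hb]
  linarith
end

section
/- Under the family elliptical potential setting, suppose additionally that S is a nonempty finite set with |S| = n, that B★ ≥ 0 and β ≥ 0, and that for every i ∈ I and every m we are given a matrix D^i_m ∈ ℝ^{n×d} with tr(D^i_m · V^i_m · (D^i_m)ᵀ) ≤ n·β² and a function Ṽ^i_m : S → ℝ with |Ṽ^i_m(s')| ≤ B★ for all s' ∈ S. Then Σ_{i∈I} Σ_{m=1}^{M_i} n^i_m · Σ_{s'∈S} Ṽ^i_m(s') · (D^i_m · c^i_m)(s') ≤ B★ · n · β · √(2·d·|I|·T·log(1 + T/(λ·d))). -/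
open Matrix

section AuxLemmas

lemma aux_symm_of_herm {d : ℕ} {A : Matrix (Fin d) (Fin d) ℝ} (h : A.IsHermitian) :
    Aᵀ = A := by
  rw [← Matrix.conjTranspose_eq_transpose_of_trivial]; exact h

lemma aux_trace_eq_sum_eig {k : Type*} [Fintype k] [DecidableEq k] {A : Matrix k k ℝ}
    (hA : A.IsHermitian) : A.trace = ∑ i, hA.eigenvalues i := by
  rw [hA.trace_eq_sum_eigenvalues]
  simp

lemma aux_psd_vecMulVec {k : Type*} [Fintype k] (c : k → ℝ) : (vecMulVec c c).PosSemidef := by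
  refine Matrix.PosSemidef.of_dotProduct_mulVec_nonneg ?_ (fun x => ?_)
  · ext i j
    simp [vecMulVec, conjTranspose, mul_comm]
  · have h : star x ⬝ᵥ (vecMulVec c c) *ᵥ x = (c ⬝ᵥ x) ^ 2 := by
      simp only [vecMulVec, dotProduct, mulVec, star_trivial, of_apply, sq, Finset.sum_mul_sum]
      rw [Finset.sum_comm]
      apply Finset.sum_congr rfl; intro i _
      rw [Finset.mul_sum]
      apply Finset.sum_congr rfl; intro j _
      ring
    rw [h]; positivity

lemma aux_psd_smul {k : Type*} [Fintype k] {A : Matrix k k ℝ} (hA : A.PosSemidef) {r : ℝ}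
    (hr : 0 ≤ r) : (r • A).PosSemidef := by
  have h1 : Aᴴ = A := hA.1
  refine Matrix.PosSemidef.of_dotProduct_mulVec_nonneg ?_ (fun x => ?_)
  · show (r • A)ᴴ = r • A
    rw [Matrix.conjTranspose_smul, h1]
    simp
  · rw [Matrix.smul_mulVec, dotProduct_smul, smul_eq_mul]
    exact mul_nonneg hr (hA.dotProduct_mulVec_nonneg x)

lemma aux_det_le_trace_div_pow {d : ℕ} (hd : 1 ≤ d) {A : Matrix (Fin d) (Fin d) ℝ}
    (hA : A.PosSemidef) : A.det ≤ (A.trace / d) ^ d := by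
  have hd' : (0:ℝ) < d := by positivity
  have hdet : A.det = ∏ i, hA.1.eigenvalues i := by
    have := hA.1.det_eq_prod_eigenvalues
    simpa using this
  have heig := hA.eigenvalues_nonneg
  have hAM := Real.geom_mean_le_arith_mean_weighted Finset.univ (fun _ => (d:ℝ)⁻¹)
      hA.1.eigenvalues (fun _ _ => by positivity)
      (by simp [Finset.card_univ]; field_simp) (fun i _ => heig i)
  have hrhs : ∑ i, (d:ℝ)⁻¹ * hA.1.eigenvalues i = A.trace / d := by
    rw [← Finset.mul_sum, aux_trace_eq_sum_eig hA.1]; ring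
  rw [hrhs] at hAM
  have hprod : (∏ i, hA.1.eigenvalues i ^ ((d:ℝ)⁻¹)) ^ d = ∏ i, hA.1.eigenvalues i := by
    rw [← Finset.prod_pow]
    apply Finset.prod_congr rfl
    intro i _
    rw [← Real.rpow_natCast (hA.1.eigenvalues i ^ ((d:ℝ)⁻¹)) d, ← Real.rpow_mul (heig i)]
    simp [inv_mul_cancel₀ hd'.ne']
  calc A.det = (∏ i, hA.1.eigenvalues i ^ ((d:ℝ)⁻¹)) ^ d := by rw [hprod, hdet]
    _ ≤ (A.trace / d) ^ d :=
        pow_le_pow_left₀ (Finset.prod_nonneg fun i _ => Real.rpow_nonneg (heig i) _) hAM d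

open scoped MatrixOrder

lemma aux_cs_posdef {d : ℕ} {V : Matrix (Fin d) (Fin d) ℝ} (hV : V.PosDef)
    (u c : Fin d → ℝ) :
    (u ⬝ᵥ c) ^ 2 ≤ (c ⬝ᵥ V⁻¹ *ᵥ c) * (u ⬝ᵥ V *ᵥ u) := by
  have hinv : V * V⁻¹ = 1 := Matrix.mul_nonsing_inv V (isUnit_iff_ne_zero.2 hV.det_pos.ne')
  set B := CFC.sqrt V with hBdef
  have hB2 : B * B = V := CFC.sqrt_mul_sqrt_self V (Matrix.nonneg_iff_posSemidef.mpr hV.posSemidef)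
  have hBsymm : Bᵀ = B :=
    aux_symm_of_herm (Matrix.nonneg_iff_posSemidef.mp (CFC.sqrt_nonneg V)).1
  have key : ∀ x y : Fin d → ℝ, (B *ᵥ x) ⬝ᵥ (B *ᵥ y) = x ⬝ᵥ V *ᵥ y := by
    intro x y
    rw [Matrix.dotProduct_mulVec, Matrix.vecMul_mulVec, hBsymm, hB2,
      ← Matrix.dotProduct_mulVec]
  have h1 : (B *ᵥ u) ⬝ᵥ (B *ᵥ (V⁻¹ *ᵥ c)) = u ⬝ᵥ c := by
    rw [key, Matrix.mulVec_mulVec, hinv, Matrix.one_mulVec]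
  have h2 : (B *ᵥ (V⁻¹ *ᵥ c)) ⬝ᵥ (B *ᵥ (V⁻¹ *ᵥ c)) = c ⬝ᵥ V⁻¹ *ᵥ c := by
    rw [key, Matrix.mulVec_mulVec, hinv, Matrix.one_mulVec, dotProduct_comm]
  have h3 : (B *ᵥ u) ⬝ᵥ (B *ᵥ u) = u ⬝ᵥ V *ᵥ u := key u u
  have hcs := Finset.sum_mul_sq_le_sq_mul_sq Finset.univ (B *ᵥ u) (B *ᵥ (V⁻¹ *ᵥ c))
  calc (u ⬝ᵥ c) ^ 2 = (∑ i, (B *ᵥ u) i * (B *ᵥ (V⁻¹ *ᵥ c)) i) ^ 2 := by rw [← h1]; rfl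
    _ ≤ (∑ i, (B *ᵥ u) i ^ 2) * (∑ i, (B *ᵥ (V⁻¹ *ᵥ c)) i ^ 2) := hcs
    _ = (u ⬝ᵥ V *ᵥ u) * (c ⬝ᵥ V⁻¹ *ᵥ c) := by
        rw [← h3, ← h2]; simp [dotProduct, sq]
    _ = (c ⬝ᵥ V⁻¹ *ᵥ c) * (u ⬝ᵥ V *ᵥ u) := mul_comm _ _

lemma aux_det_rank_one_update {d : ℕ} {A : Matrix (Fin d) (Fin d) ℝ} (hA : IsUnit A.det)
    (r : ℝ) (c : Fin d → ℝ) :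
    (A + r • vecMulVec c c).det = A.det * (1 + r * (c ⬝ᵥ A⁻¹ *ᵥ c)) := by
  have h1 : r • vecMulVec c c = Matrix.replicateCol Unit (r • c) * Matrix.replicateRow Unit c := by
    rw [← Matrix.vecMulVec_eq]
    ext i j
    simp [vecMulVec, mul_assoc]
  have h2 : (Matrix.replicateRow Unit c * A⁻¹ * Matrix.replicateCol Unit (r • c)) default default
      = r * (c ⬝ᵥ A⁻¹ *ᵥ c) := by
    simp only [Matrix.mul_apply, Matrix.replicateRow_apply, Matrix.replicateCol_apply, dotProduct,
      Matrix.mulVec, Pi.smul_apply, smul_eq_mul, Finset.sum_mul, Finset.mul_sum]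
    rw [Finset.sum_comm]
    apply Finset.sum_congr rfl; intro i _
    apply Finset.sum_congr rfl; intro j _
    ring
  rw [h1, Matrix.det_add_replicateCol_mul_replicateRow hA]
  congr 1
  rw [Matrix.det_unique, Matrix.add_apply, Matrix.one_apply_eq, h2]

lemma aux_le_two_log (t : ℝ) (h0 : 0 ≤ t) (h1 : t ≤ 1) : t ≤ 2 * Real.log (1 + t) := by
  have hconc := (strictConcaveOn_log_Ioi.concaveOn).2 (Set.mem_Ioi.2 one_pos)
    (Set.mem_Ioi.2 two_pos) (by linarith : (0:ℝ) ≤ 1 - t) h0 (by ring)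
  simp only [smul_eq_mul, Real.log_one, mul_zero, zero_add] at hconc
  have h2 : (1 - t) * (1:ℝ) + t * (2:ℝ) = 1 + t := by ring
  rw [h2] at hconc
  have hlog2 : (0.6931471803 : ℝ) < Real.log 2 := Real.log_two_gt_d9
  nlinarith [hconc]

end AuxLemmas

/-- Family elliptical potential lemma with value functions: if
`tr(D^i_m V^i_m (D^i_m)ᵀ) ≤ n β²` and `|Ṽ^i_m(s')| ≤ B★`, then
`∑_i ∑_m n^i_m ∑_{s'} Ṽ^i_m(s') (D^i_m c^i_m)(s') ≤ B★ n β √(2 d |I| T log (1 + T/(λ d)))`. -/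
theorem family_elliptical_potential_values {ι : Type*} [Fintype ι] [Nonempty ι]
    {S : Type*} [Fintype S] [Nonempty S]
    {d nn : ℕ} (hd : 1 ≤ d) (hcard : Fintype.card S = nn)
    (lam : ℝ) (hlam : 1 ≤ lam)
    (M : ι → ℕ) (c : ι → ℕ → Fin d → ℝ) (n : ι → ℕ → ℕ)
    (V : ι → ℕ → Matrix (Fin d) (Fin d) ℝ)
    (hc : ∀ i m, 1 ≤ m → m ≤ M i → Real.sqrt (∑ k, c i m k ^ 2) ≤ 1)
    (hV1 : ∀ i, V i 1 = lam • (1 : Matrix (Fin d) (Fin d) ℝ))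
    (hVrec : ∀ i m, 1 ≤ m → m ≤ M i →
      V i (m + 1) = V i m + (n i m : ℝ) • vecMulVec (c i m) (c i m))
    (hsmall : ∀ i m, 1 ≤ m → m ≤ M i →
      (n i m : ℝ) * (c i m ⬝ᵥ (V i m)⁻¹.mulVec (c i m)) ≤ 1)
    (T : ℝ) (hT : T = ∑ i, ∑ m ∈ Finset.Icc 1 (M i), (n i m : ℝ))
    (Bstar β : ℝ) (hB : 0 ≤ Bstar) (hβ : 0 ≤ β)
    (D : ι → ℕ → Matrix S (Fin d) ℝ)
    (hD : ∀ i m, 1 ≤ m → m ≤ M i →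
      (D i m * V i m * (D i m)ᵀ).trace ≤ nn * β ^ 2)
    (Vt : ι → ℕ → S → ℝ)
    (hVt : ∀ i m, 1 ≤ m → m ≤ M i → ∀ s', |Vt i m s'| ≤ Bstar) :
    ∑ i, ∑ m ∈ Finset.Icc 1 (M i),
        (n i m : ℝ) * ∑ s', Vt i m s' * (D i m).mulVec (c i m) s' ≤
      Bstar * nn * β *
        Real.sqrt (2 * d * (Fintype.card ι) * T * Real.log (1 + T / (lam * d))) := by
  classical
  have hd' : (0:ℝ) < d := by positivity
  have hlam0 : (0:ℝ) < lam := by linarith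
  -- positive definiteness of the V's
  have hPD : ∀ i, ∀ m : ℕ, m ≤ M i → (V i (m+1)).PosDef := by
    intro i m
    induction m with
    | zero =>
        intro _
        rw [hV1 i, Matrix.smul_one_eq_diagonal]
        exact Matrix.PosDef.diagonal (fun _ => hlam0)
    | succ k ih =>
        intro hk
        rw [hVrec i (k+1) (by omega) hk]
        exact (ih (by omega)).add_posSemidef
          (aux_psd_smul (aux_psd_vecMulVec _) (by positivity))
  have hPD' : ∀ i m, 1 ≤ m → m ≤ M i → (V i m).PosDef := by
    intro i m h1 h2
    obtain ⟨k, rfl⟩ : ∃ k, m = k + 1 := ⟨m - 1, by omega⟩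
    exact hPD i k (by omega)
  -- notation
  set x : ι → ℕ → ℝ := fun i m => c i m ⬝ᵥ (V i m)⁻¹ *ᵥ c i m with hxdef
  have hx0 : ∀ i m, 1 ≤ m → m ≤ M i → 0 ≤ x i m := by
    intro i m h1 h2
    simpa using ((hPD' i m h1 h2).inv.posSemidef).dotProduct_mulVec_nonneg (c i m)
  set t : ι → ℕ → ℝ := fun i m => (n i m : ℝ) * x i m with htdef
  have ht0 : ∀ i m, 1 ≤ m → m ≤ M i → 0 ≤ t i m := fun i m h1 h2 =>
    mul_nonneg (Nat.cast_nonneg _) (hx0 i m h1 h2)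
  have ht1 : ∀ i m, 1 ≤ m → m ≤ M i → t i m ≤ 1 := fun i m h1 h2 => hsmall i m h1 h2
  set τ : ι → ℝ := fun i => ∑ m ∈ Finset.Icc 1 (M i), (n i m : ℝ) with hτdef
  have hτ0 : ∀ i, 0 ≤ τ i := fun i => Finset.sum_nonneg fun m _ => Nat.cast_nonneg _
  have hτT : ∀ i, τ i ≤ T := by
    intro i
    rw [hT]
    exact Finset.single_le_sum (fun j _ => hτ0 j) (Finset.mem_univ i)
  have hT0 : 0 ≤ T := le_trans (hτ0 (Classical.arbitrary ι)) (hτT _)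
  -- determinant telescoping
  have hdet : ∀ i, ∀ k, k ≤ M i →
      (V i (k+1)).det = lam ^ d * ∏ m ∈ Finset.Icc 1 k, (1 + t i m) := by
    intro i k
    induction k with
    | zero => intro _; simp [hV1 i, Matrix.det_smul]
    | succ k ih =>
        intro hk
        rw [hVrec i (k+1) (by omega) hk,
          aux_det_rank_one_update (isUnit_iff_ne_zero.2 (hPD i k (by omega)).det_pos.ne') _ _,
          ih (by omega), Finset.prod_Icc_succ_top (by omega : 1 ≤ k + 1)]
        ring
  -- trace bound
  have htrb : ∀ i, ∀ k, k ≤ M i →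
      (V i (k+1)).trace ≤ lam * d + ∑ m ∈ Finset.Icc 1 k, (n i m : ℝ) := by
    intro i k
    induction k with
    | zero => intro _; simp [hV1 i, Matrix.trace_smul, Matrix.trace_one, mul_comm]
    | succ k ih =>
        intro hk
        rw [hVrec i (k+1) (by omega) hk, Matrix.trace_add, Matrix.trace_smul,
          Finset.sum_Icc_succ_top (by omega : 1 ≤ k + 1)]
        have hcc : (vecMulVec (c i (k+1)) (c i (k+1))).trace = ∑ j, c i (k+1) j ^ 2 := by
          simp [Matrix.trace, Matrix.diag, vecMulVec, sq]
        have hcle : ∑ j, c i (k+1) j ^ 2 ≤ 1 := by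
          have h := hc i (k+1) (by omega) hk
          have hnn : 0 ≤ ∑ j, c i (k+1) j ^ 2 := by positivity
          nlinarith [Real.sq_sqrt hnn, Real.sqrt_nonneg (∑ j, c i (k+1) j ^ 2)]
        have := ih (by omega)
        have hn0 : (0:ℝ) ≤ (n i (k+1) : ℝ) := Nat.cast_nonneg _
        have : (n i (k+1) : ℝ) • (vecMulVec (c i (k+1)) (c i (k+1))).trace
            ≤ (n i (k+1) : ℝ) := by
          rw [smul_eq_mul, hcc]
          calc (n i (k+1) : ℝ) * ∑ j, c i (k+1) j ^ 2 ≤ (n i (k+1) : ℝ) * 1 :=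
            mul_le_mul_of_nonneg_left hcle hn0
          _ = _ := mul_one _
        linarith [ih (by omega)]
  -- per-family potential bound
  set L : ℝ := Real.log (1 + T / (lam * d)) with hLdef
  have hL0 : 0 ≤ L := Real.log_nonneg (by
    have : 0 ≤ T / (lam * d) := div_nonneg hT0 (by positivity)
    linarith)
  have hpot : ∀ i, ∑ m ∈ Finset.Icc 1 (M i), t i m ≤ 2 * d * L := by
    intro i
    have hfac : ∀ m ∈ Finset.Icc 1 (M i), (0:ℝ) < 1 + t i m := by
      intro m hm
      rw [Finset.mem_Icc] at hm
      have := ht0 i m hm.1 hm.2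
      linarith
    have hP0 : (0:ℝ) < ∏ m ∈ Finset.Icc 1 (M i), (1 + t i m) :=
      Finset.prod_pos hfac
    have step1 : ∑ m ∈ Finset.Icc 1 (M i), t i m ≤
        2 * Real.log (∏ m ∈ Finset.Icc 1 (M i), (1 + t i m)) := by
      rw [Real.log_prod (fun m hm => (hfac m hm).ne'), Finset.mul_sum]
      apply Finset.sum_le_sum
      intro m hm
      rw [Finset.mem_Icc] at hm
      exact aux_le_two_log _ (ht0 i m hm.1 hm.2) (ht1 i m hm.1 hm.2)
    have hPSD := (hPD i (M i) le_rfl).posSemidef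
    have htrnn : 0 ≤ (V i (M i + 1)).trace := by
      rw [aux_trace_eq_sum_eig hPSD.1]
      exact Finset.sum_nonneg fun j _ => hPSD.eigenvalues_nonneg j
    have hdetle : (V i (M i + 1)).det ≤ ((lam * d + τ i) / d) ^ d := by
      calc (V i (M i + 1)).det ≤ ((V i (M i + 1)).trace / d) ^ d :=
            aux_det_le_trace_div_pow hd hPSD
        _ ≤ ((lam * d + τ i) / d) ^ d := by
            apply pow_le_pow_left₀ (div_nonneg htrnn hd'.le)
            gcongr
            exact htrb i (M i) le_rfl
    have hPle : ∏ m ∈ Finset.Icc 1 (M i), (1 + t i m) ≤ (1 + τ i / (lam * d)) ^ d := by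
      have hdet' := hdet i (M i) le_rfl
      have hlamd : (0:ℝ) < lam ^ d := by positivity
      have : lam ^ d * ∏ m ∈ Finset.Icc 1 (M i), (1 + t i m) ≤ ((lam * d + τ i) / d) ^ d := by
        rw [← hdet']; exact hdetle
      have heq : ((lam * d + τ i) / d) ^ d = lam ^ d * (1 + τ i / (lam * d)) ^ d := by
        rw [← mul_pow]
        congr 1
        field_simp
      rw [heq] at this
      exact le_of_mul_le_mul_left this hlamd
    have step2 : Real.log (∏ m ∈ Finset.Icc 1 (M i), (1 + t i m)) ≤ d * L := by
      calc Real.log (∏ m ∈ Finset.Icc 1 (M i), (1 + t i m))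
          ≤ Real.log ((1 + τ i / (lam * d)) ^ d) := Real.log_le_log hP0 hPle
        _ = d * Real.log (1 + τ i / (lam * d)) := by rw [Real.log_pow]
        _ ≤ d * L := by
            apply mul_le_mul_of_nonneg_left ?_ hd'.le
            apply Real.log_le_log (by positivity)
            have h1 : τ i / (lam * d) ≤ T / (lam * d) := by
              gcongr
              exact hτT i
            linarith
    linarith [step1, step2]
  -- per (i,m) bound on the inner sum
  have hterm : ∀ i m, 1 ≤ m → m ≤ M i →
      (∑ s', Vt i m s' * (D i m).mulVec (c i m) s') ≤
        Bstar * nn * β * Real.sqrt (x i m) := by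
    intro i m h1 h2
    set w : S → ℝ := (D i m).mulVec (c i m) with hwdef
    have hstep1 : (∑ s', Vt i m s' * w s') ≤ Bstar * ∑ s', |w s'| := by
      rw [Finset.mul_sum]
      apply Finset.sum_le_sum
      intro s _
      calc Vt i m s * w s ≤ |Vt i m s * w s| := le_abs_self _
        _ = |Vt i m s| * |w s| := abs_mul _ _
        _ ≤ Bstar * |w s| := mul_le_mul_of_nonneg_right (hVt i m h1 h2 s) (abs_nonneg _)
    have hstep2 : ∑ s', |w s'| ≤ Real.sqrt nn * Real.sqrt (∑ s', w s' ^ 2) := by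
      have hcs := Real.sum_mul_le_sqrt_mul_sqrt Finset.univ (fun _ => (1:ℝ))
        (fun s => |w s|)
      simp only [one_mul, one_pow, sq_abs] at hcs
      have h1s : ∑ _s : S, (1:ℝ) = nn := by
        rw [Finset.sum_const, Finset.card_univ, hcard]; simp
      rwa [h1s] at hcs
    have htr2 : (D i m * V i m * (D i m)ᵀ).trace
        = ∑ s, (D i m s ⬝ᵥ (V i m) *ᵥ D i m s) := by
      simp only [Matrix.trace, Matrix.diag_apply, Matrix.mul_apply, Matrix.transpose_apply,
        dotProduct, Matrix.mulVec, Finset.sum_mul, Finset.mul_sum]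
      apply Finset.sum_congr rfl; intro s _
      rw [Finset.sum_comm]
      apply Finset.sum_congr rfl; intro j _
      apply Finset.sum_congr rfl; intro k _
      ring
    have hstep3 : ∑ s', w s' ^ 2 ≤ x i m * (nn * β ^ 2) := by
      have hsum : ∑ s', w s' ^ 2 ≤ x i m * ∑ s, (D i m s ⬝ᵥ (V i m) *ᵥ D i m s) := by
        rw [Finset.mul_sum]
        apply Finset.sum_le_sum
        intro s _
        exact aux_cs_posdef (hPD' i m h1 h2) (D i m s) (c i m)
      calc ∑ s', w s' ^ 2 ≤ x i m * ∑ s, (D i m s ⬝ᵥ (V i m) *ᵥ D i m s) := hsum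
        _ = x i m * (D i m * V i m * (D i m)ᵀ).trace := by rw [htr2]
        _ ≤ x i m * (nn * β ^ 2) :=
            mul_le_mul_of_nonneg_left (hD i m h1 h2) (hx0 i m h1 h2)
    have hsq : Real.sqrt (∑ s', w s' ^ 2) ≤ Real.sqrt (x i m) * Real.sqrt nn * β := by
      calc Real.sqrt (∑ s', w s' ^ 2) ≤ Real.sqrt (x i m * (nn * β ^ 2)) :=
            Real.sqrt_le_sqrt hstep3
        _ = Real.sqrt (x i m) * Real.sqrt nn * β := by
            rw [Real.sqrt_mul (hx0 i m h1 h2), Real.sqrt_mul (Nat.cast_nonneg nn),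
              Real.sqrt_sq hβ, mul_assoc]
    calc (∑ s', Vt i m s' * w s') ≤ Bstar * ∑ s', |w s'| := hstep1
      _ ≤ Bstar * (Real.sqrt nn * Real.sqrt (∑ s', w s' ^ 2)) :=
          mul_le_mul_of_nonneg_left hstep2 hB
      _ ≤ Bstar * (Real.sqrt nn * (Real.sqrt (x i m) * Real.sqrt nn * β)) := by
          apply mul_le_mul_of_nonneg_left ?_ hB
          exact mul_le_mul_of_nonneg_left hsq (Real.sqrt_nonneg _)
      _ = Bstar * nn * β * Real.sqrt (x i m) := by
          rw [show Real.sqrt nn * (Real.sqrt (x i m) * Real.sqrt nn * β)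
              = (Real.sqrt nn * Real.sqrt nn) * β * Real.sqrt (x i m) by ring,
            Real.mul_self_sqrt (Nat.cast_nonneg nn)]
          ring
  -- combine
  have hK : 0 ≤ Bstar * nn * β := by positivity
  have hmain : ∑ i, ∑ m ∈ Finset.Icc 1 (M i),
      (n i m : ℝ) * ∑ s', Vt i m s' * (D i m).mulVec (c i m) s' ≤
      Bstar * nn * β * ∑ i, ∑ m ∈ Finset.Icc 1 (M i), (n i m : ℝ) * Real.sqrt (x i m) := by
    rw [Finset.mul_sum]
    apply Finset.sum_le_sum
    intro i _
    rw [Finset.mul_sum]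
    apply Finset.sum_le_sum
    intro m hm
    rw [Finset.mem_Icc] at hm
    calc (n i m : ℝ) * ∑ s', Vt i m s' * (D i m).mulVec (c i m) s'
        ≤ (n i m : ℝ) * (Bstar * nn * β * Real.sqrt (x i m)) :=
          mul_le_mul_of_nonneg_left (hterm i m hm.1 hm.2) (Nat.cast_nonneg _)
      _ = Bstar * nn * β * ((n i m : ℝ) * Real.sqrt (x i m)) := by ring
  -- Cauchy-Schwarz over the double sum
  have hCS2 : ∑ i, ∑ m ∈ Finset.Icc 1 (M i), (n i m : ℝ) * Real.sqrt (x i m) ≤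
      Real.sqrt T * Real.sqrt (∑ i, ∑ m ∈ Finset.Icc 1 (M i), t i m) := by
    have hcs := Real.sum_mul_le_sqrt_mul_sqrt
      ((Finset.univ : Finset ι).sigma (fun i => Finset.Icc 1 (M i)))
      (fun p => Real.sqrt (n p.1 p.2)) (fun p => Real.sqrt (t p.1 p.2))
    rw [Finset.sum_sigma, Finset.sum_sigma, Finset.sum_sigma] at hcs
    have he1 : ∀ i, ∀ m ∈ Finset.Icc 1 (M i),
        Real.sqrt ((n i m : ℝ)) * Real.sqrt (t i m) = (n i m : ℝ) * Real.sqrt (x i m) := by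
      intro i m hm
      rw [htdef]
      simp only
      rw [Real.sqrt_mul (Nat.cast_nonneg _), ← mul_assoc,
        Real.mul_self_sqrt (Nat.cast_nonneg _)]
    have he2 : ∀ (p : (_ : ι) × ℕ), Real.sqrt ((n p.1 p.2 : ℝ)) ^ 2 = (n p.1 p.2 : ℝ) :=
      fun p => Real.sq_sqrt (Nat.cast_nonneg _)
    calc ∑ i, ∑ m ∈ Finset.Icc 1 (M i), (n i m : ℝ) * Real.sqrt (x i m)
        = ∑ i, ∑ m ∈ Finset.Icc 1 (M i),
            Real.sqrt ((n i m : ℝ)) * Real.sqrt (t i m) := by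
          apply Finset.sum_congr rfl; intro i _
          exact (Finset.sum_congr rfl (he1 i)).symm
      _ ≤ Real.sqrt (∑ i, ∑ m ∈ Finset.Icc 1 (M i), Real.sqrt ((n i m : ℝ)) ^ 2) *
            Real.sqrt (∑ i, ∑ m ∈ Finset.Icc 1 (M i), Real.sqrt (t i m) ^ 2) := hcs
      _ = Real.sqrt T * Real.sqrt (∑ i, ∑ m ∈ Finset.Icc 1 (M i), t i m) := by
          congr 2
          · rw [hT]
            apply Finset.sum_congr rfl; intro i _
            apply Finset.sum_congr rfl; intro m _
            exact Real.sq_sqrt (Nat.cast_nonneg _)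
          · apply Finset.sum_congr rfl; intro i _
            apply Finset.sum_congr rfl; intro m hm
            rw [Finset.mem_Icc] at hm
            exact Real.sq_sqrt (ht0 i m hm.1 hm.2)
  have hsum_t : ∑ i, ∑ m ∈ Finset.Icc 1 (M i), t i m ≤ (Fintype.card ι : ℝ) * (2 * d * L) := by
    calc ∑ i, ∑ m ∈ Finset.Icc 1 (M i), t i m ≤ ∑ _i : ι, 2 * d * L :=
          Finset.sum_le_sum fun i _ => hpot i
      _ = (Fintype.card ι : ℝ) * (2 * d * L) := by
          rw [Finset.sum_const, Finset.card_univ, nsmul_eq_mul]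
  have hfin : Real.sqrt T * Real.sqrt (∑ i, ∑ m ∈ Finset.Icc 1 (M i), t i m) ≤
      Real.sqrt (2 * d * (Fintype.card ι) * T * L) := by
    calc Real.sqrt T * Real.sqrt (∑ i, ∑ m ∈ Finset.Icc 1 (M i), t i m)
        ≤ Real.sqrt T * Real.sqrt ((Fintype.card ι : ℝ) * (2 * d * L)) :=
          mul_le_mul_of_nonneg_left (Real.sqrt_le_sqrt hsum_t) (Real.sqrt_nonneg _)
      _ = Real.sqrt (T * ((Fintype.card ι : ℝ) * (2 * d * L))) :=
          (Real.sqrt_mul hT0 _).symm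
      _ = Real.sqrt (2 * d * (Fintype.card ι) * T * L) := by
          congr 1
          ring
  calc ∑ i, ∑ m ∈ Finset.Icc 1 (M i),
      (n i m : ℝ) * ∑ s', Vt i m s' * (D i m).mulVec (c i m) s'
      ≤ Bstar * nn * β * ∑ i, ∑ m ∈ Finset.Icc 1 (M i), (n i m : ℝ) * Real.sqrt (x i m) :=
        hmain
    _ ≤ Bstar * nn * β * (Real.sqrt T * Real.sqrt (∑ i, ∑ m ∈ Finset.Icc 1 (M i), t i m)) :=
        mul_le_mul_of_nonneg_left hCS2 hK
    _ ≤ Bstar * nn * β * Real.sqrt (2 * d * (Fintype.card ι) * T * L) :=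
        mul_le_mul_of_nonneg_left hfin hK
end
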